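/- arXiv:2305.10015 — 4 statements merged into one kernel-verified Lean document; each statement's English description precedes it below -/
import Mathlib

section
/- Excess-risk bound for the synthetic classification minimizer (key inequality in the proof of Theorem 4, classification part). Assume p_X and p_X̃ satisfy the (V, d)-fidelity level with 0 < d < ∞. Let η, η̂ : 𝒳 → [0,1] be measurable, and let G₂ be a set of measurable functions from 𝒳 to ℝ. Let g* ∈ G₂ minimize Φ_{0-1} over G₂ and let g̃* ∈ G₂ minimize Φ̃_{0-1} over G₂. Then Φ_{0-1}(g̃*) ≤ K_{d,V}·Φ_{0-1}(g*)^{d²/(d+1)²} + 4·K_{d,V}·‖η̂ − η‖_{L²(P_X)}^{d²/(d+1)²} + 4·‖η̂ − η‖_{L²(P_X)}, where K_{d,V} = (d^{1/(d+1)} + d^{−d/(d+1)})^{(2d+1)/(d+1)}·V^{(2d+1)/(d+1)²}. -/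
open MeasureTheory

open scoped NNReal

section Stmt13Aux

variable {k : ℕ}

private lemma aux13_rpow_add_le (a b p : ℝ) (ha : 0 ≤ a) (hb : 0 ≤ b) (hp : 0 ≤ p)
    (hp1 : p ≤ 1) : (a + b) ^ p ≤ a ^ p + b ^ p := by
  have h := NNReal.rpow_add_le_add_rpow a.toNNReal b.toNNReal hp hp1
  have h2 : (((a.toNNReal + b.toNNReal) ^ p : ℝ≥0) : ℝ) ≤
      (((a.toNNReal ^ p : ℝ≥0) : ℝ) + ((b.toNNReal ^ p : ℝ≥0) : ℝ)) := by
    exact_mod_cast h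
  rwa [NNReal.coe_rpow, NNReal.coe_rpow, NNReal.coe_rpow, NNReal.coe_add,
    Real.coe_toNNReal a ha, Real.coe_toNNReal b hb] at h2

private lemma aux13_opt {a B V d : ℝ} (hd : 0 < d) (hV : 0 ≤ V) (hB : 0 ≤ B)
    (h : ∀ C : ℝ, 0 < C → a ≤ V * C ^ (-d) + C * B) :
    a ≤ (d ^ (1 / (d + 1)) + d ^ (-(d / (d + 1)))) * V ^ (1 / (d + 1)) * B ^ (d / (d + 1)) := by
  have hd1 : (0 : ℝ) < d + 1 := by linarith
  have hK : 0 ≤ (d ^ (1 / (d + 1)) + d ^ (-(d / (d + 1)))) * V ^ (1 / (d + 1)) := by positivity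
  rcases eq_or_lt_of_le hB with hB0 | hBpos
  · have hBr : B ^ (d / (d + 1)) = 0 := by
      rw [← hB0, Real.zero_rpow (by positivity : d / (d+1) ≠ 0)]
    rw [hBr, mul_zero]
    rcases eq_or_lt_of_le hV with hV0 | hVpos
    · have := h 1 one_pos
      simpa [← hV0, ← hB0] using this
    · refine le_of_forall_pos_le_add fun ε hε => ?_
      have hVE : (0:ℝ) < V / ε := div_pos hVpos hε
      have hCpos : (0:ℝ) < (V / ε) ^ (1 / d) := Real.rpow_pos_of_pos hVE _
      have hh := h _ hCpos
      have hcalc : V * ((V / ε) ^ (1 / d)) ^ (-d) = ε := by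
        rw [← Real.rpow_mul hVE.le, show (1/d) * (-d) = -1 by field_simp,
          Real.rpow_neg_one, inv_div]
        field_simp
      rw [hcalc, ← hB0, mul_zero, add_zero] at hh
      linarith
  · rcases eq_or_lt_of_le hV with hV0 | hVpos
    · have : V ^ (1 / (d + 1)) = 0 := by
        rw [← hV0, Real.zero_rpow (by positivity : 1 / (d+1) ≠ 0)]
      rw [this, mul_zero, zero_mul]
      refine le_of_forall_pos_le_add fun ε hε => ?_
      have hh := h (ε / B) (div_pos hε hBpos)
      rw [← hV0, zero_mul, zero_add, div_mul_cancel₀ _ hBpos.ne'] at hh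
      linarith
    · have hDVB : (0:ℝ) < d * V / B := by positivity
      set C : ℝ := (d * V / B) ^ (1 / (d + 1)) with hCdef
      have hC : 0 < C := Real.rpow_pos_of_pos hDVB _
      have hh := h C hC
      have hlog : Real.log (d * V / B) = Real.log d + Real.log V - Real.log B := by
        rw [Real.log_div (by positivity) hBpos.ne', Real.log_mul hd.ne' hVpos.ne']
      have hCe : C = Real.exp ((1 / (d + 1)) * (Real.log d + Real.log V - Real.log B)) := by
        rw [hCdef, Real.rpow_def_of_pos hDVB, hlog, mul_comm]
      have t2 : C * B = d ^ (1 / (d + 1)) * V ^ (1 / (d + 1)) * B ^ (d / (d + 1)) := by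
        rw [hCe, Real.rpow_def_of_pos hd, Real.rpow_def_of_pos hVpos,
          Real.rpow_def_of_pos hBpos]
        nth_rewrite 2 [show B = Real.exp (Real.log B) by rw [Real.exp_log hBpos]]
        rw [← Real.exp_add, ← Real.exp_add, ← Real.exp_add]
        congr 1
        field_simp
        ring
      have t1 : V * C ^ (-d) = d ^ (-(d / (d + 1))) * V ^ (1 / (d + 1)) * B ^ (d / (d + 1)) := by
        have hCd : C ^ (-d)
            = Real.exp ((-d) * ((1 / (d + 1)) * (Real.log d + Real.log V - Real.log B))) := by
          rw [hCe, Real.rpow_def_of_pos (Real.exp_pos _), Real.log_exp, mul_comm]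
        rw [hCd, Real.rpow_def_of_pos hd, Real.rpow_def_of_pos hVpos,
          Real.rpow_def_of_pos hBpos]
        nth_rewrite 1 [show V = Real.exp (Real.log V) by rw [Real.exp_log hVpos]]
        rw [← Real.exp_add, ← Real.exp_add, ← Real.exp_add]
        congr 1
        field_simp
        ring
      calc a ≤ V * C ^ (-d) + C * B := hh
        _ = (d ^ (1 / (d + 1)) + d ^ (-(d / (d + 1)))) * V ^ (1 / (d + 1)) * B ^ (d / (d + 1)) := by
            rw [t1, t2]; ring

private lemma aux13_intOn {𝒳 : Set (Fin k → ℝ)} (h𝒳 : MeasurableSet 𝒳)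
    {p w : (Fin k → ℝ) → ℝ} (hpm : Measurable p) (hp : IntegrableOn p 𝒳)
    (hw : Measurable w) (hb : ∀ x ∈ 𝒳, |w x| ≤ 1) :
    IntegrableOn (fun x => w x * p x) 𝒳 := by
  refine Integrable.mono hp ((hw.mul hpm).aestronglyMeasurable) ?_
  filter_upwards [ae_restrict_mem h𝒳] with x hx
  simp only [Real.norm_eq_abs, abs_mul]
  calc |w x| * |p x| ≤ 1 * |p x| :=
        mul_le_mul_of_nonneg_right (hb x hx) (abs_nonneg _)
    _ = |p x| := one_mul _

private lemma aux13_CS {𝒳 : Set (Fin k → ℝ)} (h𝒳 : MeasurableSet 𝒳)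
    {p u : (Fin k → ℝ) → ℝ} (hpm : Measurable p) (hp : IntegrableOn p 𝒳)
    (hpn : ∀ x ∈ 𝒳, 0 ≤ p x) (hp1 : (∫ x in 𝒳, p x) = 1)
    (hu : Measurable u) (hub : ∀ x ∈ 𝒳, |u x| ≤ 1) :
    (∫ x in 𝒳, |u x| * p x) ≤ Real.sqrt (∫ x in 𝒳, (u x) ^ 2 * p x) := by
  set T := ∫ x in 𝒳, (u x) ^ 2 * p x with hTdef
  have hT0 : 0 ≤ T := setIntegral_nonneg h𝒳 fun x hx => mul_nonneg (sq_nonneg _) (hpn x hx)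
  have hint1 : IntegrableOn (fun x => |u x| * p x) 𝒳 :=
    aux13_intOn h𝒳 hpm hp hu.abs (fun x hx => by rw [abs_abs]; exact hub x hx)
  have hint2 : IntegrableOn (fun x => (u x) ^ 2 * p x) 𝒳 := by
    refine aux13_intOn h𝒳 hpm hp (hu.pow_const 2) fun x hx => ?_
    rw [abs_of_nonneg (sq_nonneg _)]
    have := hub x hx
    nlinarith [sq_abs (u x), abs_nonneg (u x)]
  have key : ∀ l m : ℝ, 0 < l → 0 < m → l * m = 1 →
      (∫ x in 𝒳, |u x| * p x) ≤ (l * T + m) / 2 := by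
    intro l m hl hm hlm
    have hpt : ∀ x ∈ 𝒳, |u x| * p x ≤ (l * ((u x) ^ 2 * p x) + m * p x) / 2 := by
      intro x hx
      have h1 := hpn x hx
      have h2 := sq_nonneg (l * |u x| - 1)
      have e : l * (u x ^ 2 * p x) + m * p x - 2 * (|u x| * p x)
          = m * (p x * (l * |u x| - 1) ^ 2) := by
        linear_combination (2 * |u x| * p x - l * (u x) ^ 2 * p x) * hlm
          + (-(m * l ^ 2 * p x)) * (sq_abs (u x))
      have h4 : 0 ≤ m * (p x * (l * |u x| - 1) ^ 2) :=
        mul_nonneg hm.le (mul_nonneg h1 h2)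
      linarith
    have hmono := setIntegral_mono_on hint1
      (((hint2.const_mul l).add (hp.const_mul m)).div_const 2) h𝒳 hpt
    calc (∫ x in 𝒳, |u x| * p x) ≤ ∫ x in 𝒳, (l * ((u x)^2 * p x) + m * p x) / 2 := hmono
      _ = (l * T + m) / 2 := by
          rw [integral_div, integral_add (hint2.const_mul l) (hp.const_mul m),
            integral_const_mul, integral_const_mul, hp1, mul_one]
  rcases eq_or_lt_of_le hT0 with hT | hTpos
  · have hle0 : (∫ x in 𝒳, |u x| * p x) ≤ 0 := by
      refine le_of_forall_pos_le_add fun ε hε => ?_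
      have := key (1 / (2 * ε)) (2 * ε) (by positivity) (by positivity) (by field_simp)
      rw [← hT] at this
      calc (∫ x in 𝒳, |u x| * p x) ≤ (1 / (2*ε) * 0 + 2*ε)/2 := this
        _ ≤ 0 + ε := by linarith
    calc (∫ x in 𝒳, |u x| * p x) ≤ 0 := hle0
      _ ≤ Real.sqrt T := Real.sqrt_nonneg _
  · have hs : 0 < Real.sqrt T := Real.sqrt_pos.mpr hTpos
    have := key (1 / Real.sqrt T) (Real.sqrt T) (by positivity) hs (by field_simp)
    calc (∫ x in 𝒳, |u x| * p x) ≤ (1 / Real.sqrt T * T + Real.sqrt T) / 2 := this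
      _ = Real.sqrt T := by
          rw [one_div, inv_mul_eq_div, Real.div_sqrt]; ring

private lemma aux13_step {𝒳 : Set (Fin k → ℝ)} (h𝒳 : MeasurableSet 𝒳)
    {p q f : (Fin k → ℝ) → ℝ} (hpm : Measurable p) (hqm : Measurable q)
    (hfm : Measurable f)
    (hpn : ∀ x ∈ 𝒳, 0 ≤ p x) (hqn : ∀ x ∈ 𝒳, 0 ≤ q x)
    (hp : IntegrableOn p 𝒳) (hq : IntegrableOn q 𝒳)
    (hf0 : ∀ x ∈ 𝒳, 0 ≤ f x) (hf1 : ∀ x ∈ 𝒳, f x ≤ 1)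
    {V d : ℝ}
    (hfid : ∀ C : ℝ, 0 < C → (∫ x in {x ∈ 𝒳 | C * q x ≤ p x}, p x) ≤ V * C ^ (-d)) :
    ∀ C : ℝ, 0 < C →
      (∫ x in 𝒳, f x * p x) ≤ V * C ^ (-d) + C * (∫ x in 𝒳, f x * q x) := by
  intro C hC
  set E : Set (Fin k → ℝ) := {x ∈ 𝒳 | C * q x ≤ p x} with hEdef
  have hE𝒳 : E ⊆ 𝒳 := fun x hx => hx.1
  have hE : MeasurableSet E :=
    h𝒳.inter (measurableSet_le (hqm.const_mul C) hpm)
  have hbf : ∀ x ∈ 𝒳, |f x| ≤ 1 := fun x hx => by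
    rw [abs_of_nonneg (hf0 x hx)]; exact hf1 x hx
  have hintp : IntegrableOn (fun x => f x * p x) 𝒳 := aux13_intOn h𝒳 hpm hp hfm hbf
  have hintq : IntegrableOn (fun x => f x * q x) 𝒳 := aux13_intOn h𝒳 hqm hq hfm hbf
  have hsplit : (∫ x in 𝒳, f x * p x)
      = (∫ x in E, f x * p x) + (∫ x in 𝒳 \ E, f x * p x) := by
    rw [← setIntegral_union disjoint_sdiff_self_right (h𝒳.diff hE)
      (hintp.mono_set hE𝒳) (hintp.mono_set Set.diff_subset),
      Set.union_diff_cancel hE𝒳]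
  have hb1 : (∫ x in E, f x * p x) ≤ V * C ^ (-d) := by
    calc (∫ x in E, f x * p x) ≤ ∫ x in E, p x := by
          refine setIntegral_mono_on (hintp.mono_set hE𝒳) (hp.mono_set hE𝒳) hE
            fun x hx => ?_
          exact mul_le_of_le_one_left (hpn x (hE𝒳 hx)) (hf1 x (hE𝒳 hx))
      _ ≤ V * C ^ (-d) := hfid C hC
  have hb2 : (∫ x in 𝒳 \ E, f x * p x) ≤ C * (∫ x in 𝒳, f x * q x) := by
    have step1 : (∫ x in 𝒳 \ E, f x * p x) ≤ ∫ x in 𝒳 \ E, C * (f x * q x) := by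
      refine setIntegral_mono_on (hintp.mono_set Set.diff_subset)
        ((hintq.mono_set Set.diff_subset).const_mul C) (h𝒳.diff hE) fun x hx => ?_
      have hx𝒳 : x ∈ 𝒳 := hx.1
      have hpq : p x ≤ C * q x := by
        by_contra hcon
        exact hx.2 ⟨hx𝒳, le_of_not_ge hcon⟩
      calc f x * p x ≤ f x * (C * q x) :=
            mul_le_mul_of_nonneg_left hpq (hf0 x hx𝒳)
        _ = C * (f x * q x) := by ring
    have step2 : (∫ x in 𝒳 \ E, f x * q x) ≤ ∫ x in 𝒳, f x * q x := by
      refine setIntegral_mono_set hintq ?_ (HasSubset.Subset.eventuallyLE Set.diff_subset)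
      filter_upwards [ae_restrict_mem h𝒳] with x hx
      exact mul_nonneg (hf0 x hx) (hqn x hx)
    calc (∫ x in 𝒳 \ E, f x * p x) ≤ ∫ x in 𝒳 \ E, C * (f x * q x) := step1
      _ = C * ∫ x in 𝒳 \ E, f x * q x := integral_const_mul _ _
      _ ≤ C * ∫ x in 𝒳, f x * q x := mul_le_mul_of_nonneg_left step2 hC.le
  linarith [hsplit, hb1, hb2]

private lemma aux13_ite_meas {g e : (Fin k → ℝ) → ℝ} (hg : Measurable g) (he : Measurable e) :
    Measurable (fun x => if (0 ≤ g x) ↔ (0 ≤ e x - 1/2) then (0:ℝ) else |2 * e x - 1|) := by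
  have hs : MeasurableSet {x | (0 ≤ g x) ↔ (0 ≤ e x - 1/2)} := by
    have heq : {x | (0 ≤ g x) ↔ (0 ≤ e x - 1/2)} =
        ({x | 0 ≤ g x} ∩ {x | 0 ≤ e x - 1/2}) ∪
          ({x | 0 ≤ g x}ᶜ ∩ {x | 0 ≤ e x - 1/2}ᶜ) := by
      ext x; by_cases h1 : 0 ≤ g x <;> by_cases h2 : 0 ≤ e x - 1/2 <;> simp [h1, h2]
    rw [heq]
    exact ((measurableSet_le measurable_const hg).inter
        (measurableSet_le measurable_const (he.sub measurable_const))).union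
      ((measurableSet_le measurable_const hg).compl.inter
        (measurableSet_le measurable_const (he.sub measurable_const)).compl)
  exact Measurable.ite hs measurable_const ((he.const_mul 2).sub measurable_const).abs

private lemma aux13_ite_bd {𝒳 : Set (Fin k → ℝ)} {g e : (Fin k → ℝ) → ℝ}
    (he01 : ∀ x ∈ 𝒳, e x ∈ Set.Icc (0:ℝ) 1) :
    ∀ x ∈ 𝒳, abs (if (0 ≤ g x) ↔ (0 ≤ e x - 1/2) then (0:ℝ) else |2 * e x - 1|) ≤ 1 := by
  intro x hx
  obtain ⟨h0, h1⟩ := he01 x hx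
  by_cases h : (0 ≤ g x) ↔ (0 ≤ e x - 1/2)
  · simp [h]
  · rw [if_neg h, abs_abs, abs_le]
    constructor <;> linarith

private lemma aux13_comp {𝒳 : Set (Fin k → ℝ)} (h𝒳 : MeasurableSet 𝒳)
    {p : (Fin k → ℝ) → ℝ} (hpm : Measurable p) (hp : IntegrableOn p 𝒳)
    (hpn : ∀ x ∈ 𝒳, 0 ≤ p x) (hp1 : (∫ x in 𝒳, p x) = 1)
    {g η1 η2 : (Fin k → ℝ) → ℝ} (hgm : Measurable g)
    (hη1m : Measurable η1) (hη2m : Measurable η2)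
    (hη1 : ∀ x ∈ 𝒳, η1 x ∈ Set.Icc (0:ℝ) 1) (hη2 : ∀ x ∈ 𝒳, η2 x ∈ Set.Icc (0:ℝ) 1) :
    (∫ x in 𝒳, (if (0 ≤ g x) ↔ (0 ≤ η1 x - 1/2) then (0:ℝ) else |2 * η1 x - 1|) * p x)
      ≤ (∫ x in 𝒳, (if (0 ≤ g x) ↔ (0 ≤ η2 x - 1/2) then (0:ℝ) else |2 * η2 x - 1|) * p x)
        + 2 * Real.sqrt (∫ x in 𝒳, (η2 x - η1 x) ^ 2 * p x) := by
  have hub : ∀ x ∈ 𝒳, |η2 x - η1 x| ≤ 1 := by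
    intro x hx
    obtain ⟨a0, a1⟩ := hη1 x hx; obtain ⟨b0, b1⟩ := hη2 x hx
    rw [abs_le]; constructor <;> linarith
  have hum : Measurable fun x => η2 x - η1 x := hη2m.sub hη1m
  have hint1 : IntegrableOn
      (fun x => (if (0 ≤ g x) ↔ (0 ≤ η1 x - 1/2) then (0:ℝ) else |2 * η1 x - 1|) * p x) 𝒳 :=
    aux13_intOn h𝒳 hpm hp (aux13_ite_meas hgm hη1m) (aux13_ite_bd hη1)
  have hint2 : IntegrableOn
      (fun x => (if (0 ≤ g x) ↔ (0 ≤ η2 x - 1/2) then (0:ℝ) else |2 * η2 x - 1|) * p x) 𝒳 :=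
    aux13_intOn h𝒳 hpm hp (aux13_ite_meas hgm hη2m) (aux13_ite_bd hη2)
  have hint3 : IntegrableOn (fun x => |η2 x - η1 x| * p x) 𝒳 :=
    aux13_intOn h𝒳 hpm hp hum.abs (fun x hx => by rw [abs_abs]; exact hub x hx)
  have hpt : ∀ x ∈ 𝒳,
      (if (0 ≤ g x) ↔ (0 ≤ η1 x - 1/2) then (0:ℝ) else |2 * η1 x - 1|) * p x
        ≤ (if (0 ≤ g x) ↔ (0 ≤ η2 x - 1/2) then (0:ℝ) else |2 * η2 x - 1|) * p x
          + 2 * (|η2 x - η1 x| * p x) := by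
    intro x hx
    have hpx := hpn x hx
    have key : (if (0 ≤ g x) ↔ (0 ≤ η1 x - 1/2) then (0:ℝ) else |2 * η1 x - 1|)
        ≤ (if (0 ≤ g x) ↔ (0 ≤ η2 x - 1/2) then (0:ℝ) else |2 * η2 x - 1|)
          + 2 * |η2 x - η1 x| := by
      by_cases hg : 0 ≤ g x <;> by_cases h1 : 0 ≤ η1 x - 1/2 <;>
        by_cases h2 : 0 ≤ η2 x - 1/2 <;>
        simp only [hg, h1, h2, iff_true, iff_false, true_iff, false_iff, not_true_eq_false,
          not_false_eq_true, if_true, if_false, true_implies, false_implies,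
          iff_of_true, if_pos, if_neg] <;>
      first
        | positivity
        | (cases abs_cases (2 * η1 x - 1) <;> cases abs_cases (2 * η2 x - 1) <;>
            cases abs_cases (η2 x - η1 x) <;> linarith)
    nlinarith [key, hpx, abs_nonneg (η2 x - η1 x),
      mul_le_mul_of_nonneg_right key hpx]
  calc (∫ x in 𝒳, (if (0 ≤ g x) ↔ (0 ≤ η1 x - 1/2) then (0:ℝ) else |2 * η1 x - 1|) * p x)
      ≤ ∫ x in 𝒳, ((if (0 ≤ g x) ↔ (0 ≤ η2 x - 1/2) then (0:ℝ) else |2 * η2 x - 1|) * p x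
          + 2 * (|η2 x - η1 x| * p x)) :=
        setIntegral_mono_on hint1 (hint2.add (hint3.const_mul 2)) h𝒳 hpt
    _ = (∫ x in 𝒳, (if (0 ≤ g x) ↔ (0 ≤ η2 x - 1/2) then (0:ℝ) else |2 * η2 x - 1|) * p x)
          + 2 * ∫ x in 𝒳, |η2 x - η1 x| * p x := by
        rw [integral_add hint2 (hint3.const_mul 2), integral_const_mul]
    _ ≤ (∫ x in 𝒳, (if (0 ≤ g x) ↔ (0 ≤ η2 x - 1/2) then (0:ℝ) else |2 * η2 x - 1|) * p x)
          + 2 * Real.sqrt (∫ x in 𝒳, (η2 x - η1 x) ^ 2 * p x) := by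
        have := aux13_CS h𝒳 hpm hp hpn hp1 hum hub
        linarith

end Stmt13Aux

/-- **Excess-risk bound for the synthetic classification minimizer** (key inequality
in the proof of Theorem 4, classification part).  `sign(t) = 1` when `t ≥ 0` and `−1`
otherwise; `Φ_{0-1}(g) = ∫ 1{sign(g) ≠ sign(η − 1/2)} |2η − 1| p_X` and
`Φ̃_{0-1}(g) = ∫ 1{sign(g) ≠ sign(η̂ − 1/2)} |2η̂ − 1| p_X̃`.  `gstar` minimizes
`Φ_{0-1}` over `G₂` and `gtstar` minimizes `Φ̃_{0-1}` over `G₂`. -/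
theorem stmt13
    {k : ℕ} (𝒳 : Set (Fin k → ℝ)) (h𝒳 : MeasurableSet 𝒳)
    (pX pXt : (Fin k → ℝ) → ℝ)
    (hpX_meas : Measurable pX) (hpXt_meas : Measurable pXt)
    (hpX_nonneg : ∀ x ∈ 𝒳, 0 ≤ pX x) (hpXt_nonneg : ∀ x ∈ 𝒳, 0 ≤ pXt x)
    (hpX_int : IntegrableOn pX 𝒳) (hpXt_int : IntegrableOn pXt 𝒳)
    (hpX_one : (∫ x in 𝒳, pX x) = 1) (hpXt_one : (∫ x in 𝒳, pXt x) = 1)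
    (V d : ℝ) (hV : 0 ≤ V) (hd : 0 < d)
    -- (V, d)-fidelity level
    (hfid : ∀ C : ℝ, 0 < C →
      (∫ x in {x ∈ 𝒳 | C * pXt x ≤ pX x}, pX x) ≤ V * C ^ (-d) ∧
      (∫ x in {x ∈ 𝒳 | C * pX x ≤ pXt x}, pXt x) ≤ V * C ^ (-d))
    (η ηhat : (Fin k → ℝ) → ℝ)
    (hη : Measurable η) (hηhat : Measurable ηhat)
    (hη01 : ∀ x ∈ 𝒳, η x ∈ Set.Icc (0 : ℝ) 1) (hηhat01 : ∀ x ∈ 𝒳, ηhat x ∈ Set.Icc (0 : ℝ) 1)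
    -- excess risks
    (Φ01 Φt01 : ((Fin k → ℝ) → ℝ) → ℝ)
    (hΦ01 : ∀ g, Φ01 g =
      ∫ x in 𝒳, (if (0 ≤ g x) ↔ (0 ≤ η x - 1 / 2) then (0 : ℝ) else |2 * η x - 1|) * pX x)
    (hΦt01 : ∀ g, Φt01 g =
      ∫ x in 𝒳, (if (0 ≤ g x) ↔ (0 ≤ ηhat x - 1 / 2) then (0 : ℝ) else |2 * ηhat x - 1|) * pXt x)
    (G2 : Set ((Fin k → ℝ) → ℝ)) (hG2 : ∀ g ∈ G2, Measurable g)
    (gstar gtstar : (Fin k → ℝ) → ℝ)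
    (hgstar : gstar ∈ G2) (hgtstar : gtstar ∈ G2)
    (hgstar_min : ∀ g ∈ G2, Φ01 gstar ≤ Φ01 g)
    (hgtstar_min : ∀ g ∈ G2, Φt01 gtstar ≤ Φt01 g) :
    Φ01 gtstar ≤
      ((d ^ (1 / (d + 1)) + d ^ (-(d / (d + 1)))) ^ ((2 * d + 1) / (d + 1))
          * V ^ ((2 * d + 1) / (d + 1) ^ 2)) * Φ01 gstar ^ (d ^ 2 / (d + 1) ^ 2)
        + 4 * ((d ^ (1 / (d + 1)) + d ^ (-(d / (d + 1)))) ^ ((2 * d + 1) / (d + 1))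
            * V ^ ((2 * d + 1) / (d + 1) ^ 2))
          * Real.sqrt (∫ x in 𝒳, (ηhat x - η x) ^ 2 * pX x) ^ (d ^ 2 / (d + 1) ^ 2)
        + 4 * Real.sqrt (∫ x in 𝒳, (ηhat x - η x) ^ 2 * pX x) := by

  have hmgt : Measurable gtstar := hG2 _ hgtstar
  have hmgs : Measurable gstar := hG2 _ hgstar
  have hd1 : (0:ℝ) < d + 1 := by linarith
  set S : ℝ := Real.sqrt (∫ x in 𝒳, (ηhat x - η x) ^ 2 * pX x) with hSdef
  have hS0 : 0 ≤ S := Real.sqrt_nonneg _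
  set r : ℝ := d / (d + 1) with hrdef
  have hr0 : 0 < r := by positivity
  have hr1 : r ≤ 1 := by rw [hrdef, div_le_one hd1]; linarith
  set K0 : ℝ := (d ^ (1 / (d + 1)) + d ^ (-(d / (d + 1)))) * V ^ (1 / (d + 1)) with hK0def
  have hK0 : 0 ≤ K0 := by positivity
  -- bounds and nonnegativity facts for the ηhat-based indicator functions
  have hf0 : ∀ (g : (Fin k → ℝ) → ℝ), ∀ x ∈ 𝒳,
      (0:ℝ) ≤ (if (0 ≤ g x) ↔ (0 ≤ ηhat x - 1/2) then (0:ℝ) else |2 * ηhat x - 1|) := by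
    intro g x hx
    by_cases h : (0 ≤ g x) ↔ (0 ≤ ηhat x - 1/2)
    · rw [if_pos h]
    · rw [if_neg h]; exact abs_nonneg _
  have hf1 : ∀ (g : (Fin k → ℝ) → ℝ), ∀ x ∈ 𝒳,
      (if (0 ≤ g x) ↔ (0 ≤ ηhat x - 1/2) then (0:ℝ) else |2 * ηhat x - 1|) ≤ 1 := by
    intro g x hx
    exact le_trans (le_abs_self _) (aux13_ite_bd hηhat01 x hx)
  -- c1 : Φ01 gtstar ≤ Φhat gtstar + 2 S
  have c1 : Φ01 gtstar ≤
      (∫ x in 𝒳, (if (0 ≤ gtstar x) ↔ (0 ≤ ηhat x - 1/2) then (0:ℝ)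
          else |2 * ηhat x - 1|) * pX x) + 2 * S := by
    rw [hΦ01]
    exact aux13_comp h𝒳 hpX_meas hpX_int hpX_nonneg hpX_one hmgt hη hηhat hη01 hηhat01
  -- nonnegativity of relevant integrals
  have hΦt_gt_nonneg : 0 ≤ Φt01 gtstar := by
    rw [hΦt01]
    exact setIntegral_nonneg h𝒳 fun x hx =>
      mul_nonneg (hf0 gtstar x hx) (hpXt_nonneg x hx)
  have hhat_gs_nonneg : 0 ≤ ∫ x in 𝒳,
      (if (0 ≤ gstar x) ↔ (0 ≤ ηhat x - 1/2) then (0:ℝ) else |2 * ηhat x - 1|) * pX x :=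
    setIntegral_nonneg h𝒳 fun x hx => mul_nonneg (hf0 gstar x hx) (hpX_nonneg x hx)
  have hA0 : 0 ≤ Φ01 gstar := by
    rw [hΦ01]
    refine setIntegral_nonneg h𝒳 fun x hx => mul_nonneg ?_ (hpX_nonneg x hx)
    by_cases h : (0 ≤ gstar x) ↔ (0 ≤ η x - 1/2)
    · rw [if_pos h]
    · rw [if_neg h]; exact abs_nonneg _
  -- c2 : Φhat gtstar ≤ K0 * (Φt01 gtstar) ^ r
  have c2 : (∫ x in 𝒳, (if (0 ≤ gtstar x) ↔ (0 ≤ ηhat x - 1/2) then (0:ℝ)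
      else |2 * ηhat x - 1|) * pX x) ≤ K0 * (Φt01 gtstar) ^ r := by
    rw [hΦt01]
    have hB : 0 ≤ ∫ x in 𝒳,
        (if (0 ≤ gtstar x) ↔ (0 ≤ ηhat x - 1/2) then (0:ℝ) else |2 * ηhat x - 1|) * pXt x :=
      setIntegral_nonneg h𝒳 fun x hx => mul_nonneg (hf0 gtstar x hx) (hpXt_nonneg x hx)
    have := aux13_opt hd hV hB
      (aux13_step h𝒳 hpX_meas hpXt_meas (aux13_ite_meas hmgt hηhat)
        hpX_nonneg hpXt_nonneg hpX_int hpXt_int (hf0 gtstar) (hf1 gtstar)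
        (fun C hC => (hfid C hC).1))
    calc _ ≤ _ := this
      _ = K0 * (∫ x in 𝒳, (if (0 ≤ gtstar x) ↔ (0 ≤ ηhat x - 1/2) then (0:ℝ)
            else |2 * ηhat x - 1|) * pXt x) ^ r := by rw [hK0def, hrdef]
  -- c4 : Φt01 gstar ≤ K0 * (Φhat gstar) ^ r
  have c4 : Φt01 gstar ≤ K0 * (∫ x in 𝒳, (if (0 ≤ gstar x) ↔ (0 ≤ ηhat x - 1/2) then (0:ℝ)
      else |2 * ηhat x - 1|) * pX x) ^ r := by
    rw [hΦt01]
    have := aux13_opt hd hV hhat_gs_nonneg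
      (aux13_step h𝒳 hpXt_meas hpX_meas (aux13_ite_meas hmgs hηhat)
        hpXt_nonneg hpX_nonneg hpXt_int hpX_int (hf0 gstar) (hf1 gstar)
        (fun C hC => (hfid C hC).2))
    calc _ ≤ _ := this
      _ = K0 * (∫ x in 𝒳, (if (0 ≤ gstar x) ↔ (0 ≤ ηhat x - 1/2) then (0:ℝ)
            else |2 * ηhat x - 1|) * pX x) ^ r := by rw [hK0def, hrdef]
  -- c5 : Φhat gstar ≤ Φ01 gstar + 2 S
  have c5 : (∫ x in 𝒳, (if (0 ≤ gstar x) ↔ (0 ≤ ηhat x - 1/2) then (0:ℝ)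
      else |2 * ηhat x - 1|) * pX x) ≤ Φ01 gstar + 2 * S := by
    rw [hΦ01]
    have := aux13_comp h𝒳 hpX_meas hpX_int hpX_nonneg hpX_one hmgs hηhat hη hηhat01 hη01
    have hswap : (∫ x in 𝒳, (η x - ηhat x) ^ 2 * pX x)
        = ∫ x in 𝒳, (ηhat x - η x) ^ 2 * pX x :=
      integral_congr_ae (Filter.Eventually.of_forall fun x => by ring)
    rw [hswap] at this
    exact this
  -- assemble the chain
  set A : ℝ := Φ01 gstar with hAdef
  have hA2S : 0 ≤ A + 2 * S := by linarith
  have chain : (Φt01 gtstar) ^ r ≤ (K0 * (A + 2 * S) ^ r) ^ r := by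
    refine Real.rpow_le_rpow hΦt_gt_nonneg ?_ hr0.le
    calc Φt01 gtstar ≤ Φt01 gstar := hgtstar_min gstar hgstar
      _ ≤ K0 * (∫ x in 𝒳, (if (0 ≤ gstar x) ↔ (0 ≤ ηhat x - 1/2) then (0:ℝ)
            else |2 * ηhat x - 1|) * pX x) ^ r := c4
      _ ≤ K0 * (A + 2 * S) ^ r :=
          mul_le_mul_of_nonneg_left
            (Real.rpow_le_rpow hhat_gs_nonneg c5 hr0.le) hK0
  have hmain : Φ01 gtstar ≤ K0 * (K0 * (A + 2 * S) ^ r) ^ r + 2 * S := by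
    calc Φ01 gtstar ≤ (∫ x in 𝒳, (if (0 ≤ gtstar x) ↔ (0 ≤ ηhat x - 1/2) then (0:ℝ)
          else |2 * ηhat x - 1|) * pX x) + 2 * S := c1
      _ ≤ K0 * (Φt01 gtstar) ^ r + 2 * S := by linarith [c2]
      _ ≤ K0 * (K0 * (A + 2 * S) ^ r) ^ r + 2 * S := by
          have := mul_le_mul_of_nonneg_left chain hK0
          linarith
  -- algebraic identities
  have hid1 : K0 * (K0 * (A + 2 * S) ^ r) ^ r = K0 ^ (1 + r) * (A + 2 * S) ^ (r * r) := by
    rw [Real.mul_rpow hK0 (Real.rpow_nonneg hA2S _), ← Real.rpow_mul hA2S,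
      Real.rpow_add' hK0 (by positivity : (1:ℝ) + r ≠ 0), Real.rpow_one]
    ring
  set Kdv : ℝ := (d ^ (1 / (d + 1)) + d ^ (-(d / (d + 1)))) ^ ((2 * d + 1) / (d + 1))
      * V ^ ((2 * d + 1) / (d + 1) ^ 2) with hKdvdef
  have hKdv0 : 0 ≤ Kdv := by positivity
  have hKid : K0 ^ (1 + r) = Kdv := by
    rw [hK0def, hKdvdef, Real.mul_rpow (by positivity) (Real.rpow_nonneg hV _),
      ← Real.rpow_mul hV]
    congr 1
    · congr 1
      rw [hrdef]; field_simp; ring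
    · congr 1
      rw [hrdef]; field_simp; ring
  have hrr : r * r = d ^ 2 / (d + 1) ^ 2 := by
    rw [hrdef, div_mul_div_comm]; ring_nf
  have hrr1 : r * r ≤ 1 := by nlinarith
  have hsub : (A + 2 * S) ^ (r * r) ≤ A ^ (r * r) + 2 ^ (r * r) * S ^ (r * r) := by
    have h := aux13_rpow_add_le A (2 * S) (r * r) hA0 (by positivity)
      (by positivity) hrr1
    rwa [Real.mul_rpow (by norm_num) hS0] at h
  have h2rr : (2:ℝ) ^ (r * r) ≤ 2 := by
    calc (2:ℝ) ^ (r * r) ≤ (2:ℝ) ^ (1:ℝ) :=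
          Real.rpow_le_rpow_of_exponent_le one_le_two hrr1
      _ = 2 := Real.rpow_one 2
  have hSrr : 0 ≤ S ^ (r * r) := Real.rpow_nonneg hS0 _
  have hArr : 0 ≤ A ^ (r * r) := Real.rpow_nonneg hA0 _
  have h2rrS : (2:ℝ) ^ (r * r) * S ^ (r * r) ≤ 2 * S ^ (r * r) :=
    mul_le_mul_of_nonneg_right h2rr hSrr
  have hfinal : Φ01 gtstar ≤ Kdv * A ^ (r * r) + 4 * Kdv * S ^ (r * r) + 4 * S := by
    have e2 : 0 ≤ Kdv * S ^ (r * r) := mul_nonneg hKdv0 hSrr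
    calc Φ01 gtstar ≤ K0 * (K0 * (A + 2 * S) ^ r) ^ r + 2 * S := hmain
      _ = Kdv * (A + 2 * S) ^ (r * r) + 2 * S := by rw [hid1, hKid]
      _ ≤ Kdv * A ^ (r * r) + 4 * Kdv * S ^ (r * r) + 4 * S := by
          have hKsub' : Kdv * (A + 2 * S) ^ (r * r)
              ≤ Kdv * A ^ (r * r) + 2 * (Kdv * S ^ (r * r)) := by
            calc Kdv * (A + 2 * S) ^ (r * r)
                ≤ Kdv * (A ^ (r * r) + 2 * S ^ (r * r)) :=
                  mul_le_mul_of_nonneg_left (by linarith) hKdv0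
              _ = Kdv * A ^ (r * r) + 2 * (Kdv * S ^ (r * r)) := by ring
          have e3 : (4:ℝ) * Kdv * S ^ (r * r) = 4 * (Kdv * S ^ (r * r)) := by ring
          linarith [hKsub', e2, hS0, e3]
  rw [← hrr]
  exact hfinal
end

section
/- Consistent model comparison for regression (Theorem 4, regression part). Assume p_X and p_X̃ satisfy the (V, d)-fidelity level with 0 < d < ∞. Let μ : 𝒳 → ℝ be measurable, let F₁ and F₂ be sets of measurable functions, and for i = 1, 2 let f*_i ∈ F_i minimize Φ_s(f) = ∫(f − μ)² p_X over F_i, with Φ_s(f*₂) < Φ_s(f*₁). Let U ≥ 0 be a constant and suppose C_{d,V,U}²·Φ_s(f*₂)^{d²/(d+1)²} < Φ_s(f*₁), where C_{d,V,U} = (d^{1/(d+1)} + d^{−d/(d+1)})^{(3d+1)/(2(d+1))}·V^{(2d+1)/(2(d+1)²)}·U^{(2d+1)/(d+1)²}. Let (μ̂_n)_{n≥1} be random measurable functions on a probability space (Ω, P) such that: the real random variables ‖μ̂_n − μ‖_{L²(P_X)} are measurable and converge to 0 in probability as n → ∞, and |f(x) − μ̂_n(ω)(x)| ≤ U for all f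 ∈ F₂, all x ∈ 𝒳, all n and P-almost every ω. For each n and ω, let f̃*_{i,n,ω} ∈ F_i minimize ∫(f − μ̂_n(ω))² p_X̃ over F_i (i = 1, 2), and assume the events {ω : Φ_s(f̃*_{1,n,ω}) > Φ_s(f̃*_{2,n,ω})} are measurable. Then P( Φ_s(f̃*_{1,n}) > Φ_s(f̃*_{2,n}) ) → 1 as n → ∞. -/
open MeasureTheory Filter
open scoped ENNReal

lemma aux_lint_le {k : ℕ} {s : Set (Fin k → ℝ)} (hs : MeasurableSet s)
    {p h : (Fin k → ℝ) → ℝ} (hp_meas : Measurable p)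
    (hp_nonneg : ∀ x ∈ s, 0 ≤ p x) (hp_int : IntegrableOn p s)
    {M : ℝ} (hM : 0 ≤ M) (hhM : ∀ x ∈ s, h x ≤ M) :
    (∫⁻ x in s, ENNReal.ofReal (h x * p x)) ≤
      ENNReal.ofReal M * ENNReal.ofReal (∫ x in s, p x) := by
  have step1 : (∫⁻ x in s, ENNReal.ofReal (h x * p x)) ≤
      ∫⁻ x in s, ENNReal.ofReal (M * p x) := by
    refine setLIntegral_mono (by fun_prop) fun x hx => ?_
    exact ENNReal.ofReal_le_ofReal
      (mul_le_mul_of_nonneg_right (hhM x hx) (hp_nonneg x hx))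
  refine step1.trans ?_
  have : ∀ x, ENNReal.ofReal (M * p x) = ENNReal.ofReal M * ENNReal.ofReal (p x) :=
    fun x => ENNReal.ofReal_mul hM
  simp_rw [this]
  rw [lintegral_const_mul _ (by fun_prop),
    ofReal_integral_eq_lintegral_ofReal hp_int
      ((ae_restrict_iff' hs).2 (Filter.Eventually.of_forall hp_nonneg))]

lemma aux_key {k : ℕ} {𝒳 : Set (Fin k → ℝ)} (h𝒳 : MeasurableSet 𝒳)
    {p q h : (Fin k → ℝ) → ℝ} (hp_meas : Measurable p) (hq_meas : Measurable q)
    (hh_meas : Measurable h)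
    (hp_nonneg : ∀ x ∈ 𝒳, 0 ≤ p x) (hp_int : IntegrableOn p 𝒳)
    {V d : ℝ} (hd : 0 < d)
    (hfid : ∀ C : ℝ, 0 < C → (∫ x in {x ∈ 𝒳 | C * q x ≤ p x}, p x) ≤ V * C ^ (-d))
    {M : ℝ} (hM : 0 ≤ M) (hh0 : ∀ x ∈ 𝒳, 0 ≤ h x) (hhM : ∀ x ∈ 𝒳, h x ≤ M)
    {C : ℝ} (hC : 0 < C) :
    (∫⁻ x in 𝒳, ENNReal.ofReal (h x * p x)) ≤
      ENNReal.ofReal (M * (V * C ^ (-d))) +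
        ENNReal.ofReal C * ∫⁻ x in 𝒳, ENNReal.ofReal (h x * q x) := by
  have hBmeas : MeasurableSet {x | C * q x ≤ p x} :=
    measurableSet_le (hq_meas.const_mul C) hp_meas
  rw [← lintegral_inter_add_diff (fun x => ENNReal.ofReal (h x * p x)) 𝒳 hBmeas]
  gcongr
  · -- part on the set where p ≥ C q
    have hsub : 𝒳 ∩ {x | C * q x ≤ p x} ⊆ 𝒳 := Set.inter_subset_left
    have hb := aux_lint_le (h𝒳.inter hBmeas) hp_meas
      (fun x hx => hp_nonneg x (hsub hx)) (hp_int.mono_set hsub) hM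
      (fun x hx => hhM x (hsub hx))
    refine hb.trans ?_
    rw [← ENNReal.ofReal_mul hM]
    refine ENNReal.ofReal_le_ofReal ?_
    have hset : 𝒳 ∩ {x | C * q x ≤ p x} = {x ∈ 𝒳 | C * q x ≤ p x} := rfl
    rw [hset]
    have := hfid C hC
    nlinarith [this]
  · -- part where p < C q
    have step : (∫⁻ x in 𝒳 \ {x | C * q x ≤ p x}, ENNReal.ofReal (h x * p x)) ≤
        ∫⁻ x in 𝒳 \ {x | C * q x ≤ p x}, ENNReal.ofReal (C * (h x * q x)) := by
      refine setLIntegral_mono (by fun_prop) fun x hx => ?_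
      refine ENNReal.ofReal_le_ofReal ?_
      have hx1 : x ∈ 𝒳 := hx.1
      have hx2 : p x < C * q x := not_le.1 hx.2
      have := hh0 x hx1
      nlinarith
    refine step.trans ?_
    simp_rw [ENNReal.ofReal_mul hC.le]
    rw [lintegral_const_mul _ (by fun_prop)]
    gcongr
    exact Set.diff_subset

-- real computation at the optimal C
lemma aux_opt {M V t d : ℝ} (hd : 0 < d) (hw : 0 < M * V) (ht : 0 < t) :
    M * (V * ((d * (M * V) / t) ^ ((1:ℝ)/(d+1))) ^ (-d)) + (d * (M * V) / t) ^ ((1:ℝ)/(d+1)) * t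
      = (d ^ (1/(d+1)) + d ^ (-(d/(d+1)))) * ((M * V) ^ (1/(d+1)) * t ^ (d/(d+1))) := by
  set w := M * V with hwdef
  have hd1 : (0:ℝ) < d + 1 := by linarith
  have hdw : 0 < d * w := by positivity
  have hbase : 0 < d * w / t := by positivity
  have h1 : ((d * w / t) ^ ((1:ℝ)/(d+1))) ^ (-d) = (d * w / t) ^ (-(d/(d+1))) := by
    rw [← Real.rpow_mul hbase.le]
    ring_nf
  have hMw : M * (V * (d * w / t) ^ (-(d/(d+1)))) = w * (d * w / t) ^ (-(d/(d+1))) := by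
    rw [hwdef]; ring
  rw [h1, hMw]
  have e1 : (d * w / t) ^ (-(d/(d+1))) = (t / (d * w)) ^ (d/(d+1)) := by
    rw [Real.rpow_neg hbase.le, ← Real.inv_rpow hbase.le, inv_div]
  have e2 : (t / (d * w)) ^ (d/(d+1)) = t ^ (d/(d+1)) / (d ^ (d/(d+1)) * w ^ (d/(d+1))) := by
    rw [Real.div_rpow ht.le hdw.le, Real.mul_rpow hd.le (by positivity)]
  have e3 : (d * w / t) ^ ((1:ℝ)/(d+1)) = d ^ ((1:ℝ)/(d+1)) * w ^ ((1:ℝ)/(d+1)) / t ^ ((1:ℝ)/(d+1)) := by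
    rw [Real.div_rpow hdw.le ht.le, Real.mul_rpow hd.le (by positivity)]
  rw [e1, e2, e3]
  have hw1 : w * (t ^ (d/(d+1)) / (d ^ (d/(d+1)) * w ^ (d/(d+1))))
      = d ^ (-(d/(d+1))) * (w ^ (1/(d+1)) * t ^ (d/(d+1))) := by
    rw [Real.rpow_neg hd.le]
    have : w ^ ((1:ℝ)/(d+1)) = w / w ^ (d/(d+1)) := by
      rw [eq_div_iff (by positivity), ← Real.rpow_add hw]
      rw [show (1:ℝ)/(d+1) + d/(d+1) = 1 by field_simp; try ring, Real.rpow_one]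
    rw [this]
    field_simp
    try ring
  have hw2 : d ^ ((1:ℝ)/(d+1)) * w ^ ((1:ℝ)/(d+1)) / t ^ ((1:ℝ)/(d+1)) * t
      = d ^ ((1:ℝ)/(d+1)) * (w ^ (1/(d+1)) * t ^ (d/(d+1))) := by
    have : t / t ^ ((1:ℝ)/(d+1)) = t ^ (d/(d+1)) := by
      rw [div_eq_iff (by positivity), ← Real.rpow_add ht]
      rw [show d/(d+1) + 1/(d+1) = 1 by field_simp; try ring, Real.rpow_one]
    rw [← this]
    field_simp
    try ring
  rw [hw1, hw2]
  ring

lemma aux_transfer {k : ℕ} {𝒳 : Set (Fin k → ℝ)} (h𝒳 : MeasurableSet 𝒳)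
    {p q h : (Fin k → ℝ) → ℝ} (hp_meas : Measurable p) (hq_meas : Measurable q)
    (hh_meas : Measurable h)
    (hp_nonneg : ∀ x ∈ 𝒳, 0 ≤ p x) (hp_int : IntegrableOn p 𝒳)
    {V d : ℝ} (hV : 0 ≤ V) (hd : 0 < d)
    (hfid : ∀ C : ℝ, 0 < C → (∫ x in {x ∈ 𝒳 | C * q x ≤ p x}, p x) ≤ V * C ^ (-d))
    {M : ℝ} (hM : 0 ≤ M) (hh0 : ∀ x ∈ 𝒳, 0 ≤ h x) (hhM : ∀ x ∈ 𝒳, h x ≤ M)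
    (hT : (∫⁻ x in 𝒳, ENNReal.ofReal (h x * q x)) ≠ ∞) :
    (∫⁻ x in 𝒳, ENNReal.ofReal (h x * p x)) ≤
      ENNReal.ofReal ((d ^ (1/(d+1)) + d ^ (-(d/(d+1)))) * ((M * V) ^ ((1:ℝ)/(d+1)) *
        (∫⁻ x in 𝒳, ENNReal.ofReal (h x * q x)).toReal ^ (d/(d+1)))) := by
  set T := ∫⁻ x in 𝒳, ENNReal.ofReal (h x * q x) with hTdef
  set t := T.toReal with htdef
  have hTt : T = ENNReal.ofReal t := by
    rw [htdef, ENNReal.ofReal_toReal hT]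
  have ht0 : 0 ≤ t := ENNReal.toReal_nonneg
  have key : ∀ C : ℝ, 0 < C →
      (∫⁻ x in 𝒳, ENNReal.ofReal (h x * p x)) ≤
        ENNReal.ofReal (M * (V * C ^ (-d))) + ENNReal.ofReal C * T :=
    fun C hC => aux_key h𝒳 hp_meas hq_meas hh_meas hp_nonneg hp_int hd hfid hM hh0 hhM hC
  rcases eq_or_lt_of_le (mul_nonneg hM hV) with hw0 | hw
  · -- M * V = 0 : left side is 0
    refine le_trans ?_ zero_le
    have hle : ∀ j : ℕ, (∫⁻ x in 𝒳, ENNReal.ofReal (h x * p x)) ≤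
        ENNReal.ofReal ((1/((j:ℝ)+1)) * t) := by
      intro j
      have hj : (0:ℝ) < 1/((j:ℝ)+1) := by positivity
      have := key _ hj
      rw [hTt, ← ENNReal.ofReal_mul hj.le] at this
      refine this.trans_eq ?_
      have : M * (V * (1/((j:ℝ)+1)) ^ (-d)) = 0 := by
        have : M * V = 0 := hw0.symm
        nlinarith [Real.rpow_nonneg (le_of_lt (show (0:ℝ) < 1/((j:ℝ)+1) by positivity)) (-d),
          this]
      rw [this, ENNReal.ofReal_zero, zero_add]
    have hlim : Tendsto (fun j : ℕ => ENNReal.ofReal ((1/((j:ℝ)+1)) * t)) atTop (nhds 0) := by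
      rw [show (0:ℝ≥0∞) = ENNReal.ofReal 0 by simp]
      refine (ENNReal.continuous_ofReal.tendsto 0).comp ?_
      have : Tendsto (fun j : ℕ => 1/((j:ℝ)+1)) atTop (nhds 0) :=
        tendsto_one_div_add_atTop_nhds_zero_nat
      simpa using this.mul_const t
    exact ge_of_tendsto' hlim hle
  · rcases eq_or_lt_of_le ht0 with ht0' | ht
    · -- t = 0 : use C → ∞
      refine le_trans ?_ zero_le
      have hle : ∀ j : ℕ, (∫⁻ x in 𝒳, ENNReal.ofReal (h x * p x)) ≤
          ENNReal.ofReal (M * (V * ((j:ℝ)+1) ^ (-d))) := by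
        intro j
        have hj : (0:ℝ) < (j:ℝ)+1 := by positivity
        have := key _ hj
        rw [hTt, ← ht0', ENNReal.ofReal_zero, mul_zero, add_zero] at this
        exact this
      have hlim : Tendsto (fun j : ℕ => ENNReal.ofReal (M * (V * ((j:ℝ)+1) ^ (-d))))
          atTop (nhds 0) := by
        rw [show (0:ℝ≥0∞) = ENNReal.ofReal 0 by simp]
        refine (ENNReal.continuous_ofReal.tendsto 0).comp ?_
        have h1 : Tendsto (fun j : ℕ => ((j:ℝ)+1) ^ (-d)) atTop (nhds 0) :=
          (tendsto_rpow_neg_atTop hd).comp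
            (tendsto_atTop_add_const_right atTop 1 tendsto_natCast_atTop_atTop)
        have := (h1.const_mul V).const_mul M
        simpa [mul_assoc] using this
      exact ge_of_tendsto' hlim hle
    · -- main case
      set C := (d * (M * V) / t) ^ ((1:ℝ)/(d+1)) with hCdef
      have hC : 0 < C := Real.rpow_pos_of_pos (by positivity) _
      have := key C hC
      rw [hTt, ← ENNReal.ofReal_mul hC.le, ← ENNReal.ofReal_add (by positivity) (by positivity)]
        at this
      refine this.trans (ENNReal.ofReal_le_ofReal ?_)
      rw [hCdef, aux_opt hd hw ht]

lemma aux_elp {k : ℕ} {𝒳 : Set (Fin k → ℝ)}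
    {p : (Fin k → ℝ) → ℝ} (hp : Measurable p)
    {g : (Fin k → ℝ) → ℝ} (hg : Measurable g) :
    eLpNorm g 2 ((volume.restrict 𝒳).withDensity fun x => ENNReal.ofReal (p x)) =
      (∫⁻ x in 𝒳, ENNReal.ofReal ((g x)^2 * p x)) ^ ((1:ℝ)/2) := by
  rw [eLpNorm_eq_lintegral_rpow_enorm_toReal two_ne_zero ENNReal.ofNat_ne_top]
  rw [lintegral_withDensity_eq_lintegral_mul _ (by fun_prop) (by fun_prop)]
  congr 1
  · refine lintegral_congr fun x => ?_
    simp only [Pi.mul_apply]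
    rw [ENNReal.ofReal_mul (sq_nonneg _), mul_comm]
    congr 1
    rw [Real.enorm_eq_ofReal_abs, ENNReal.toReal_ofNat,
      ENNReal.ofReal_rpow_of_nonneg (abs_nonneg _) (by norm_num)]
    rw [show ((2:ℝ)) = ((2:ℕ):ℝ) by norm_num, Real.rpow_natCast, sq_abs]

lemma aux_tri {k : ℕ} {𝒳 : Set (Fin k → ℝ)}
    {p : (Fin k → ℝ) → ℝ} (hp : Measurable p)
    {a b c : (Fin k → ℝ) → ℝ} (ha : Measurable a) (hb : Measurable b) (hc : Measurable c) :
    (∫⁻ x in 𝒳, ENNReal.ofReal ((a x - c x)^2 * p x)) ^ ((1:ℝ)/2) ≤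
      (∫⁻ x in 𝒳, ENNReal.ofReal ((a x - b x)^2 * p x)) ^ ((1:ℝ)/2) +
      (∫⁻ x in 𝒳, ENNReal.ofReal ((b x - c x)^2 * p x)) ^ ((1:ℝ)/2) := by
  set ν := ((volume.restrict 𝒳).withDensity fun x => ENNReal.ofReal (p x)) with hν
  rw [← aux_elp (g := fun x => a x - c x) hp (ha.sub hc), ← aux_elp (g := fun x => a x - b x) hp (ha.sub hb),
    ← aux_elp (g := fun x => b x - c x) hp (hb.sub hc)]
  have heq : (fun x => a x - c x) = (fun x => a x - b x) + (fun x => b x - c x) := by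
    funext x; simp only [Pi.add_apply]; ring
  rw [heq]
  exact eLpNorm_add_le ((ha.sub hb).aestronglyMeasurable) ((hb.sub hc).aestronglyMeasurable)
    one_le_two

lemma aux_half_sq (x : ℝ≥0∞) : (x ^ ((1:ℝ)/2)) ^ (2:ℕ) = x := by
  rw [← ENNReal.rpow_natCast (x ^ ((1:ℝ)/2)) 2, ← ENNReal.rpow_mul]
  norm_num

lemma aux_cge1 {d : ℝ} (hd : 0 < d) : 1 ≤ d ^ ((1:ℝ)/(d+1)) + d ^ (-(d/(d+1))) := by
  rcases le_total 1 d with h1 | h1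
  · have : (1:ℝ) ≤ d ^ ((1:ℝ)/(d+1)) := Real.one_le_rpow h1 (by positivity)
    have h2 : (0:ℝ) ≤ d ^ (-(d/(d+1))) := Real.rpow_nonneg hd.le _
    linarith
  · have : (1:ℝ) ≤ d ^ (-(d/(d+1))) := by
      apply Real.one_le_rpow_of_pos_of_le_one_of_nonpos hd h1
      have : 0 ≤ d/(d+1) := by positivity
      linarith
    have h2 : (0:ℝ) ≤ d ^ ((1:ℝ)/(d+1)) := Real.rpow_nonneg hd.le _
    linarith

set_option maxHeartbeats 2000000 in
lemma aux_det {k : ℕ} {𝒳 : Set (Fin k → ℝ)} (h𝒳 : MeasurableSet 𝒳)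
    {pX pXt : (Fin k → ℝ) → ℝ}
    (hpX_meas : Measurable pX) (hpXt_meas : Measurable pXt)
    (hpX_nonneg : ∀ x ∈ 𝒳, 0 ≤ pX x) (hpXt_nonneg : ∀ x ∈ 𝒳, 0 ≤ pXt x)
    (hpX_int : IntegrableOn pX 𝒳) (hpXt_int : IntegrableOn pXt 𝒳)
    (hpX_one : (∫ x in 𝒳, pX x) = 1) (hpXt_one : (∫ x in 𝒳, pXt x) = 1)
    {V d : ℝ} (hV : 0 ≤ V) (hd : 0 < d)
    (hfid1 : ∀ C : ℝ, 0 < C → (∫ x in {x ∈ 𝒳 | C * pXt x ≤ pX x}, pX x) ≤ V * C ^ (-d))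
    (hfid2 : ∀ C : ℝ, 0 < C → (∫ x in {x ∈ 𝒳 | C * pX x ≤ pXt x}, pXt x) ≤ V * C ^ (-d))
    {μ g f2 ft2 : (Fin k → ℝ) → ℝ}
    (hμ : Measurable μ) (hg : Measurable g) (hf2m : Measurable f2) (hft2m : Measurable ft2)
    {U ε : ℝ} (hU : 0 ≤ U) (hε : 0 ≤ ε)
    (hb2 : ∀ x ∈ 𝒳, |f2 x - g x| ≤ U) (hbt2 : ∀ x ∈ 𝒳, |ft2 x - g x| ≤ U)
    (hmin : (∫⁻ x in 𝒳, ENNReal.ofReal ((ft2 x - g x)^2 * pXt x)) ≤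
      ∫⁻ x in 𝒳, ENNReal.ofReal ((f2 x - g x)^2 * pXt x))
    (hnorm : (∫⁻ x in 𝒳, ENNReal.ofReal ((g x - μ x)^2 * pX x)) ^ ((1:ℝ)/2) ≤
      ENNReal.ofReal ε)
    (hfin : (∫⁻ x in 𝒳, ENNReal.ofReal ((f2 x - μ x)^2 * pX x)) ≠ ∞) :
    (∫⁻ x in 𝒳, ENNReal.ofReal ((ft2 x - μ x)^2 * pX x)) ≤
      ENNReal.ofReal (((((d ^ (1 / (d + 1)) + d ^ (-(d / (d + 1)))) ^ ((3 * d + 1) / (2 * (d + 1)))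
            * V ^ ((2 * d + 1) / (2 * (d + 1) ^ 2)) * U ^ ((2 * d + 1) / (d + 1) ^ 2)) ^ 2
          * (((∫⁻ x in 𝒳, ENNReal.ofReal ((f2 x - μ x)^2 * pX x)).toReal ^ ((1:ℝ)/2) + ε) ^ 2)
            ^ (d ^ 2 / (d + 1) ^ 2)) ^ ((1:ℝ)/2) + ε) ^ 2) := by
  set a := (∫⁻ x in 𝒳, ENNReal.ofReal ((f2 x - μ x)^2 * pX x)).toReal with hadef
  have ha0 : 0 ≤ a := ENNReal.toReal_nonneg
  set c := d ^ ((1:ℝ)/(d+1)) + d ^ (-(d/(d+1))) with hcdef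
  have hc1 : 1 ≤ c := aux_cge1 hd
  have hc0 : 0 ≤ c := by linarith
  set w := U^2 * V with hwdef
  have hw0 : 0 ≤ w := by positivity
  set δ := d/(d+1) with hδdef
  have hδ0 : 0 ≤ δ := by positivity
  set A := (a ^ ((1:ℝ)/2) + ε) ^ 2 with hAdef
  have hA0 : 0 ≤ A := sq_nonneg _
  -- squared bounds from |·| ≤ U
  have hsq2 : ∀ x ∈ 𝒳, (f2 x - g x)^2 ≤ U^2 := fun x hx => by
    have := hb2 x hx; nlinarith [abs_nonneg (f2 x - g x), sq_abs (f2 x - g x)]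
  have hsqt2 : ∀ x ∈ 𝒳, (ft2 x - g x)^2 ≤ U^2 := fun x hx => by
    have := hbt2 x hx; nlinarith [abs_nonneg (ft2 x - g x), sq_abs (ft2 x - g x)]
  -- finiteness of the two synthetic/real integrals of bounded functions
  have hfinX : ∀ {h : (Fin k → ℝ) → ℝ}, (∀ x ∈ 𝒳, h x ≤ U^2) →
      (∫⁻ x in 𝒳, ENNReal.ofReal (h x * pX x)) ≠ ∞ := by
    intro h hh
    have := aux_lint_le h𝒳 hpX_meas hpX_nonneg hpX_int (by positivity : (0:ℝ) ≤ U^2) hh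
    rw [hpX_one] at this
    exact ne_top_of_le_ne_top (by simp) this
  have hfinXt : ∀ {h : (Fin k → ℝ) → ℝ}, (∀ x ∈ 𝒳, h x ≤ U^2) →
      (∫⁻ x in 𝒳, ENNReal.ofReal (h x * pXt x)) ≠ ∞ := by
    intro h hh
    have := aux_lint_le h𝒳 hpXt_meas hpXt_nonneg hpXt_int (by positivity : (0:ℝ) ≤ U^2) hh
    rw [hpXt_one] at this
    exact ne_top_of_le_ne_top (by simp) this
  -- step 1 : T f2 ≤ ofReal A
  have step1 : (∫⁻ x in 𝒳, ENNReal.ofReal ((f2 x - g x)^2 * pX x)) ≤ ENNReal.ofReal A := by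
    have tri := aux_tri hpX_meas hf2m hμ hg (𝒳 := 𝒳)
    have hrw : (∫⁻ x in 𝒳, ENNReal.ofReal ((μ x - g x)^2 * pX x)) =
        ∫⁻ x in 𝒳, ENNReal.ofReal ((g x - μ x)^2 * pX x) :=
      lintegral_congr fun x => by ring_nf
    rw [hrw] at tri
    have h2 : (∫⁻ x in 𝒳, ENNReal.ofReal ((f2 x - μ x)^2 * pX x)) ^ ((1:ℝ)/2) =
        ENNReal.ofReal (a ^ ((1:ℝ)/2)) := by
      rw [hadef, ← ENNReal.ofReal_rpow_of_nonneg ha0 (by norm_num), ENNReal.ofReal_toReal hfin]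
    have hmid : (∫⁻ x in 𝒳, ENNReal.ofReal ((f2 x - μ x)^2 * pX x)) ^ ((1:ℝ)/2) +
        (∫⁻ x in 𝒳, ENNReal.ofReal ((g x - μ x)^2 * pX x)) ^ ((1:ℝ)/2) ≤
        ENNReal.ofReal (a ^ ((1:ℝ)/2) + ε) := by
      rw [ENNReal.ofReal_add (by positivity) hε]
      exact add_le_add h2.le hnorm
    have := tri.trans hmid
    calc (∫⁻ x in 𝒳, ENNReal.ofReal ((f2 x - g x)^2 * pX x))
        = ((∫⁻ x in 𝒳, ENNReal.ofReal ((f2 x - g x)^2 * pX x)) ^ ((1:ℝ)/2)) ^ (2:ℕ) :=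
          (aux_half_sq _).symm
      _ ≤ (ENNReal.ofReal (a ^ ((1:ℝ)/2) + ε)) ^ (2:ℕ) := pow_le_pow_left' this 2
      _ = ENNReal.ofReal A := by rw [← ENNReal.ofReal_pow (by positivity), hAdef]
  -- step 2 : T2 f2 ≤ ofReal (c * (w^(1/(d+1)) * A^δ))
  have step2 : (∫⁻ x in 𝒳, ENNReal.ofReal ((f2 x - g x)^2 * pXt x)) ≤
      ENNReal.ofReal (c * (w ^ ((1:ℝ)/(d+1)) * A ^ δ)) := by
    have tr := aux_transfer h𝒳 hpXt_meas hpX_meas (by fun_prop : Measurable fun x => (f2 x - g x)^2)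
      hpXt_nonneg hpXt_int hV hd hfid2 (by positivity : (0:ℝ) ≤ U^2)
      (fun x _ => sq_nonneg _) hsq2 (hfinX hsq2)
    refine tr.trans (ENNReal.ofReal_le_ofReal ?_)
    rw [hwdef, hcdef, hδdef]
    have htle : (∫⁻ x in 𝒳, ENNReal.ofReal ((f2 x - g x)^2 * pX x)).toReal ≤ A :=
      ENNReal.toReal_le_of_le_ofReal hA0 step1
    gcongr
  -- step 3 : T ft2 ≤ ofReal (c * (w^(1/(d+1)) * (c * (w^(1/(d+1)) * A^δ))^δ))
  have step3 : (∫⁻ x in 𝒳, ENNReal.ofReal ((ft2 x - g x)^2 * pX x)) ≤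
      ENNReal.ofReal (c * (w ^ ((1:ℝ)/(d+1)) * (c * (w ^ ((1:ℝ)/(d+1)) * A ^ δ)) ^ δ)) := by
    have tr := aux_transfer h𝒳 hpX_meas hpXt_meas
      (by fun_prop : Measurable fun x => (ft2 x - g x)^2)
      hpX_nonneg hpX_int hV hd hfid1 (by positivity : (0:ℝ) ≤ U^2)
      (fun x _ => sq_nonneg _) hsqt2 (hfinXt hsqt2)
    refine tr.trans (ENNReal.ofReal_le_ofReal ?_)
    rw [hwdef, hcdef, hδdef]
    have htle : (∫⁻ x in 𝒳, ENNReal.ofReal ((ft2 x - g x)^2 * pXt x)).toReal ≤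
        c * (w ^ ((1:ℝ)/(d+1)) * A ^ δ) :=
      ENNReal.toReal_le_of_le_ofReal (by positivity) (hmin.trans step2)
    rw [← hwdef, ← hcdef, ← hδdef]
    gcongr
  -- the real-number bound r2 ≤ c2 * A^(d²/(d+1)²)
  set c2 := ((d ^ (1 / (d + 1)) + d ^ (-(d / (d + 1)))) ^ ((3 * d + 1) / (2 * (d + 1)))
      * V ^ ((2 * d + 1) / (2 * (d + 1) ^ 2)) * U ^ ((2 * d + 1) / (d + 1) ^ 2)) ^ 2 with hc2def
  have hkey : c * (w ^ ((1:ℝ)/(d+1)) * (c * (w ^ ((1:ℝ)/(d+1)) * A ^ δ)) ^ δ) ≤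
      c2 * A ^ (d^2/(d+1)^2) := by
    have hd1 : (0:ℝ) < d + 1 := by linarith
    have hexp : c * (w ^ ((1:ℝ)/(d+1)) * (c * (w ^ ((1:ℝ)/(d+1)) * A ^ δ)) ^ δ) =
        (c ^ ((1:ℝ) + δ)) * (w ^ ((1+δ)/(d+1)) * A ^ (d^2/(d+1)^2)) := by
      have h1 : (c * (w ^ ((1:ℝ)/(d+1)) * A ^ δ)) ^ δ
          = c ^ δ * (w ^ (δ/(d+1)) * (A ^ δ) ^ δ) := by
        rw [Real.mul_rpow hc0 (mul_nonneg (Real.rpow_nonneg hw0 _) (Real.rpow_nonneg hA0 _)),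
          Real.mul_rpow (Real.rpow_nonneg hw0 _) (Real.rpow_nonneg hA0 _),
          ← Real.rpow_mul hw0, show (1:ℝ)/(d+1)*δ = δ/(d+1) by ring]
      rw [h1]
      have h1δ : (0:ℝ) < 1 + δ := by linarith
      rw [Real.rpow_add' hc0 h1δ.ne', Real.rpow_one]
      have hsum : (0:ℝ) < 1/(d+1) + δ/(d+1) :=
        add_pos_of_pos_of_nonneg (div_pos one_pos hd1) (div_nonneg hδ0 hd1.le)
      rw [show ((1:ℝ)+δ)/(d+1) = 1/(d+1) + δ/(d+1) by ring,
        Real.rpow_add' hw0 hsum.ne']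
      rw [show d^2/(d+1)^2 = δ*δ by rw [hδdef]; field_simp, Real.rpow_mul hA0]
      ring
    rw [hexp]
    have hd1ne : d + 1 ≠ 0 := hd1.ne'
    have hc2eq : c2 = c ^ ((3*d+1)/(d+1)) * (w ^ ((2*d+1)/(d+1)^2)) := by
      have hX : (c ^ ((3*d+1)/(2*(d+1)))) ^ (2:ℕ) = c ^ ((3*d+1)/(d+1)) := by
        rw [← Real.rpow_natCast (c ^ ((3*d+1)/(2*(d+1)))) 2, ← Real.rpow_mul hc0,
          show (3*d+1)/(2*(d+1)) * ((2:ℕ):ℝ) = (3*d+1)/(d+1) by push_cast; field_simp]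
      have hY : (V ^ ((2*d+1)/(2*(d+1)^2))) ^ (2:ℕ) = V ^ ((2*d+1)/(d+1)^2) := by
        rw [← Real.rpow_natCast (V ^ ((2*d+1)/(2*(d+1)^2))) 2, ← Real.rpow_mul hV,
          show (2*d+1)/(2*(d+1)^2) * ((2:ℕ):ℝ) = (2*d+1)/(d+1)^2 by push_cast; field_simp]
      have hZ : (U ^ ((2*d+1)/(d+1)^2)) ^ (2:ℕ) = U ^ (2*((2*d+1)/(d+1)^2)) := by
        rw [← Real.rpow_natCast (U ^ ((2*d+1)/(d+1)^2)) 2, ← Real.rpow_mul hU,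
          show (2*d+1)/(d+1)^2 * ((2:ℕ):ℝ) = 2*((2*d+1)/(d+1)^2) by push_cast; ring]
      have hW : w ^ ((2*d+1)/(d+1)^2) = U ^ (2*((2*d+1)/(d+1)^2)) * V ^ ((2*d+1)/(d+1)^2) := by
        rw [hwdef, Real.mul_rpow (sq_nonneg U) hV, ← Real.rpow_natCast U 2,
          ← Real.rpow_mul hU]
        push_cast
        ring_nf
      rw [hc2def, mul_pow, mul_pow, hX, hY, hZ, hW, hcdef]
      ring
    have he1 : (1:ℝ) + δ ≤ (3*d+1)/(d+1) := by
      rw [hδdef, le_div_iff₀ hd1]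
      have hcan : d/(d+1)*(d+1) = d := div_mul_cancel₀ d hd1ne
      nlinarith
    have he2 : ((1:ℝ)+δ)/(d+1) = (2*d+1)/(d+1)^2 := by
      rw [hδdef]; field_simp; ring
    rw [hc2eq, he2]
    have hcpow : c ^ ((1:ℝ)+δ) ≤ c ^ ((3*d+1)/(d+1)) :=
      Real.rpow_le_rpow_of_exponent_le hc1 he1
    rw [← mul_assoc]
    exact mul_le_mul_of_nonneg_right
      (mul_le_mul_of_nonneg_right hcpow (Real.rpow_nonneg hw0 _)) (Real.rpow_nonneg hA0 _)
  -- final triangle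
  have tri := aux_tri hpX_meas hft2m hg hμ (𝒳 := 𝒳)
  have hfinal : (∫⁻ x in 𝒳, ENNReal.ofReal ((ft2 x - μ x)^2 * pX x)) ^ ((1:ℝ)/2) ≤
      ENNReal.ofReal ((c2 * A ^ (d^2/(d+1)^2)) ^ ((1:ℝ)/2) + ε) := by
    refine tri.trans ?_
    have hc20 : 0 ≤ c2 := by rw [hc2def]; positivity
    have hr0 : 0 ≤ c2 * A ^ (d^2/(d+1)^2) := mul_nonneg hc20 (Real.rpow_nonneg hA0 _)
    rw [ENNReal.ofReal_add (Real.rpow_nonneg hr0 _) hε]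
    refine add_le_add ?_ hnorm
    calc (∫⁻ x in 𝒳, ENNReal.ofReal ((ft2 x - g x)^2 * pX x)) ^ ((1:ℝ)/2)
        ≤ (ENNReal.ofReal (c2 * A ^ (d^2/(d+1)^2))) ^ ((1:ℝ)/2) := by
          refine ENNReal.rpow_le_rpow ?_ (by norm_num)
          exact step3.trans (ENNReal.ofReal_le_ofReal hkey)
      _ = ENNReal.ofReal ((c2 * A ^ (d^2/(d+1)^2)) ^ ((1:ℝ)/2)) :=
          ENNReal.ofReal_rpow_of_nonneg hr0 (by norm_num)
  calc (∫⁻ x in 𝒳, ENNReal.ofReal ((ft2 x - μ x)^2 * pX x))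
      = ((∫⁻ x in 𝒳, ENNReal.ofReal ((ft2 x - μ x)^2 * pX x)) ^ ((1:ℝ)/2)) ^ (2:ℕ) :=
        (aux_half_sq _).symm
    _ ≤ (ENNReal.ofReal ((c2 * A ^ (d^2/(d+1)^2)) ^ ((1:ℝ)/2) + ε)) ^ (2:ℕ) :=
        pow_le_pow_left' hfinal 2
    _ = ENNReal.ofReal (((c2 * A ^ (d^2/(d+1)^2)) ^ ((1:ℝ)/2) + ε) ^ 2) := by
        have hc20 : 0 ≤ c2 := by rw [hc2def]; positivity
        have hr0 : 0 ≤ c2 * A ^ (d^2/(d+1)^2) := mul_nonneg hc20 (Real.rpow_nonneg hA0 _)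
        rw [← ENNReal.ofReal_pow (add_nonneg (Real.rpow_nonneg hr0 _) hε)]
    _ ≤ _ := by rw [hAdef, hc2def]

/-- **Consistent model comparison for regression (Theorem 4, regression part).**
Excess risks are expressed as lower Lebesgue integrals (so that no integrability
assumptions are needed): `Φ_s(f) = ∫⁻ (f − μ)² p_X` and, for the estimate `μ̂_n(ω)`,
the synthetic excess risk is `∫⁻ (f − μ̂_n(ω))² p_X̃`.  `f1` and `f2` minimize `Φ_s`
over `F₁` and `F₂` with `Φ_s(f2) < Φ_s(f1)` and the gap condition
`C_{d,V,U}² Φ_s(f2)^{d²/(d+1)²} < Φ_s(f1)`, `‖μ̂_n − μ‖_{L²(P_X)} → 0` in probability,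
`|f − μ̂_n| ≤ U` on `𝒳` for all `f ∈ F₂` a.s., and `ft1 n ω`, `ft2 n ω` minimize the
synthetic excess risk over `F₁`, `F₂`.  Then
`P(Φ_s(ft2 n) < Φ_s(ft1 n)) → 1`. -/
theorem stmt14
    {k : ℕ} (𝒳 : Set (Fin k → ℝ)) (h𝒳 : MeasurableSet 𝒳)
    (pX pXt : (Fin k → ℝ) → ℝ)
    (hpX_meas : Measurable pX) (hpXt_meas : Measurable pXt)
    (hpX_nonneg : ∀ x ∈ 𝒳, 0 ≤ pX x) (hpXt_nonneg : ∀ x ∈ 𝒳, 0 ≤ pXt x)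
    (hpX_int : IntegrableOn pX 𝒳) (hpXt_int : IntegrableOn pXt 𝒳)
    (hpX_one : (∫ x in 𝒳, pX x) = 1) (hpXt_one : (∫ x in 𝒳, pXt x) = 1)
    (V d : ℝ) (hV : 0 ≤ V) (hd : 0 < d)
    -- (V, d)-fidelity level
    (hfid : ∀ C : ℝ, 0 < C →
      (∫ x in {x ∈ 𝒳 | C * pXt x ≤ pX x}, pX x) ≤ V * C ^ (-d) ∧
      (∫ x in {x ∈ 𝒳 | C * pX x ≤ pXt x}, pXt x) ≤ V * C ^ (-d))
    (μ : (Fin k → ℝ) → ℝ) (hμ : Measurable μ)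
    (F1 F2 : Set ((Fin k → ℝ) → ℝ))
    (hF1 : ∀ f ∈ F1, Measurable f) (hF2 : ∀ f ∈ F2, Measurable f)
    -- excess risk under the original distribution
    (Φs : ((Fin k → ℝ) → ℝ) → ℝ≥0∞)
    (hΦs : ∀ f, Φs f = ∫⁻ x in 𝒳, ENNReal.ofReal ((f x - μ x) ^ 2 * pX x))
    (f1 f2 : (Fin k → ℝ) → ℝ) (hf1 : f1 ∈ F1) (hf2 : f2 ∈ F2)
    (hf1_min : ∀ f ∈ F1, Φs f1 ≤ Φs f) (hf2_min : ∀ f ∈ F2, Φs f2 ≤ Φs f)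
    (hlt : Φs f2 < Φs f1)
    (U : ℝ) (hU : 0 ≤ U)
    -- gap condition: C_{d,V,U}² Φ_s(f*₂)^{d²/(d+1)²} < Φ_s(f*₁)
    (hgap : ENNReal.ofReal
        (((d ^ (1 / (d + 1)) + d ^ (-(d / (d + 1)))) ^ ((3 * d + 1) / (2 * (d + 1)))
            * V ^ ((2 * d + 1) / (2 * (d + 1) ^ 2)) * U ^ ((2 * d + 1) / (d + 1) ^ 2)) ^ 2)
        * Φs f2 ^ (d ^ 2 / (d + 1) ^ 2) < Φs f1)
    -- the sequence of estimates μ̂_n on a probability space (Ω, P)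
    {Ω : Type*} [MeasurableSpace Ω] (P : Measure Ω) [IsProbabilityMeasure P]
    (μhat : ℕ → Ω → (Fin k → ℝ) → ℝ)
    (hμhat_mble : ∀ n ω, Measurable (μhat n ω))
    (hnorm_meas : ∀ n, Measurable fun ω =>
      (∫⁻ x in 𝒳, ENNReal.ofReal ((μhat n ω x - μ x) ^ 2 * pX x)) ^ ((1 : ℝ) / 2))
    -- ‖μ̂_n − μ‖_{L²(P_X)} → 0 in probability
    (hconv : ∀ ε : ℝ, 0 < ε →
      Tendsto (fun n => P {ω | ENNReal.ofReal ε <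
          (∫⁻ x in 𝒳, ENNReal.ofReal ((μhat n ω x - μ x) ^ 2 * pX x)) ^ ((1 : ℝ) / 2)})
        atTop (nhds 0))
    -- |f − μ̂_n| ≤ U on 𝒳 for all f ∈ F₂, almost surely
    (hbdd : ∀ n, ∀ᵐ ω ∂P, ∀ f ∈ F2, ∀ x ∈ 𝒳, |f x - μhat n ω x| ≤ U)
    -- minimizers of the synthetic excess risk over F₁ and F₂
    (ft1 ft2 : ℕ → Ω → (Fin k → ℝ) → ℝ)
    (hft1 : ∀ n ω, ft1 n ω ∈ F1 ∧ ∀ f ∈ F1,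
      (∫⁻ x in 𝒳, ENNReal.ofReal ((ft1 n ω x - μhat n ω x) ^ 2 * pXt x)) ≤
        ∫⁻ x in 𝒳, ENNReal.ofReal ((f x - μhat n ω x) ^ 2 * pXt x))
    (hft2 : ∀ n ω, ft2 n ω ∈ F2 ∧ ∀ f ∈ F2,
      (∫⁻ x in 𝒳, ENNReal.ofReal ((ft2 n ω x - μhat n ω x) ^ 2 * pXt x)) ≤
        ∫⁻ x in 𝒳, ENNReal.ofReal ((f x - μhat n ω x) ^ 2 * pXt x))
    -- measurability of the comparison events
    (hevent : ∀ n, MeasurableSet {ω | Φs (ft2 n ω) < Φs (ft1 n ω)}) :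
    Tendsto (fun n => P {ω | Φs (ft2 n ω) < Φs (ft1 n ω)}) atTop (nhds 1) := by
  classical
  have hΦ2ne : Φs f2 ≠ ⊤ := hlt.ne_top
  set γ := d^2/(d+1)^2 with hγdef
  have hγ0 : 0 ≤ γ := by positivity
  set a := (Φs f2).toReal with hadef
  have ha0 : 0 ≤ a := ENNReal.toReal_nonneg
  set c2 := ((d ^ (1 / (d + 1)) + d ^ (-(d / (d + 1)))) ^ ((3 * d + 1) / (2 * (d + 1)))
      * V ^ ((2 * d + 1) / (2 * (d + 1) ^ 2)) * U ^ ((2 * d + 1) / (d + 1) ^ 2)) ^ 2 with hc2def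
  have hc20 : 0 ≤ c2 := sq_nonneg _
  set breal : ℝ → ℝ := fun ε =>
    ((c2 * ((a ^ ((1:ℝ)/2) + ε) ^ 2) ^ γ) ^ ((1:ℝ)/2) + ε) ^ 2 with hbdef
  -- value at 0
  have hb0lt : ENNReal.ofReal (breal 0) < Φs f1 := by
    have h1 : (a ^ ((1:ℝ)/2) + 0) ^ 2 = a := by
      rw [add_zero, ← Real.rpow_natCast (a ^ ((1:ℝ)/2)) 2, ← Real.rpow_mul ha0]
      norm_num
    have h2 : breal 0 = c2 * a ^ γ := by
      have hb00 : breal 0 = ((c2 * ((a ^ ((1:ℝ)/2) + 0) ^ 2) ^ γ) ^ ((1:ℝ)/2) + 0) ^ 2 := rfl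
      rw [hb00, h1, add_zero, ← Real.rpow_natCast ((c2 * a ^ γ) ^ ((1:ℝ)/2)) 2,
        ← Real.rpow_mul (mul_nonneg hc20 (Real.rpow_nonneg ha0 _))]
      norm_num
    rw [h2, ENNReal.ofReal_mul hc20]
    have h3 : ENNReal.ofReal (a ^ γ) = Φs f2 ^ γ := by
      rw [← ENNReal.ofReal_rpow_of_nonneg ha0 hγ0, hadef, ENNReal.ofReal_toReal hΦ2ne]
    rw [h3]
    exact hgap
  -- choose ε > 0 with ofReal (breal ε) < Φs f1
  have hcontb : ContinuousAt breal 0 := by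
    have c1 : ContinuousAt (fun ε : ℝ => (a ^ ((1:ℝ)/2) + ε) ^ 2) 0 := by fun_prop
    have c2' : ContinuousAt (fun ε : ℝ => ((a ^ ((1:ℝ)/2) + ε) ^ 2) ^ γ) 0 :=
      (Real.continuousAt_rpow_const _ _ (Or.inr hγ0)).comp c1
    have c3 : ContinuousAt (fun ε : ℝ => c2 * ((a ^ ((1:ℝ)/2) + ε) ^ 2) ^ γ) 0 :=
      c2'.const_mul c2
    have c4 : ContinuousAt
        (fun ε : ℝ => (c2 * ((a ^ ((1:ℝ)/2) + ε) ^ 2) ^ γ) ^ ((1:ℝ)/2)) 0 :=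
      (Real.continuousAt_rpow_const _ _ (Or.inr (by norm_num))).comp c3
    exact (c4.add continuousAt_id).pow 2
  have hev : ∀ᶠ ε in nhds (0:ℝ), ENNReal.ofReal (breal ε) < Φs f1 :=
    (ENNReal.continuous_ofReal.continuousAt.comp hcontb).eventually_lt
      continuousAt_const hb0lt
  have hev' : ∀ᶠ ε in nhdsWithin (0:ℝ) (Set.Ioi (0:ℝ)),
      ENNReal.ofReal (breal ε) < Φs f1 ∧ ε ∈ Set.Ioi (0:ℝ) :=
    (hev.filter_mono nhdsWithin_le_nhds).and self_mem_nhdsWithin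
  obtain ⟨ε, hεlt, hεpos⟩ := hev'.exists
  rw [Set.mem_Ioi] at hεpos
  -- the bad sets
  set B : ℕ → Set Ω := fun n => {ω | ENNReal.ofReal ε <
      (∫⁻ x in 𝒳, ENNReal.ofReal ((μhat n ω x - μ x) ^ 2 * pX x)) ^ ((1 : ℝ) / 2)} with hBdef
  have hBmeas : ∀ n, MeasurableSet (B n) := fun n =>
    measurableSet_lt measurable_const (hnorm_meas n)
  -- a.e. inclusion
  have hsub : ∀ n, ∀ᵐ ω ∂P, ω ∈ (B n)ᶜ → ω ∈ {ω | Φs (ft2 n ω) < Φs (ft1 n ω)} := by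
    intro n
    filter_upwards [hbdd n] with ω hbω hBω
    have hnormω : (∫⁻ x in 𝒳,
        ENNReal.ofReal ((μhat n ω x - μ x) ^ 2 * pX x)) ^ ((1 : ℝ) / 2) ≤
        ENNReal.ofReal ε := not_lt.1 hBω
    have hfin2 : (∫⁻ x in 𝒳, ENNReal.ofReal ((f2 x - μ x)^2 * pX x)) ≠ ⊤ := by
      rw [← hΦs]; exact hΦ2ne
    have hdet := aux_det h𝒳 hpX_meas hpXt_meas hpX_nonneg hpXt_nonneg hpX_int hpXt_int
      hpX_one hpXt_one hV hd (fun C hC => (hfid C hC).1) (fun C hC => (hfid C hC).2)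
      hμ (hμhat_mble n ω) (hF2 f2 hf2) (hF2 _ (hft2 n ω).1)
      hU hεpos.le (fun x hx => hbω f2 hf2 x hx)
      (fun x hx => hbω _ (hft2 n ω).1 x hx)
      ((hft2 n ω).2 f2 hf2) hnormω hfin2
    have hlhs : Φs (ft2 n ω) ≤ ENNReal.ofReal (breal ε) := by
      rw [hΦs]
      refine hdet.trans (le_of_eq ?_)
      rw [hbdef]
      simp only []
      rw [← hΦs, ← hadef, ← hc2def, ← hγdef]
    have : Φs (ft2 n ω) < Φs f1 := lt_of_le_of_lt hlhs hεlt
    exact lt_of_lt_of_le this (hf1_min _ (hft1 n ω).1)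
  have hlow : ∀ n, 1 - P (B n) ≤ P {ω | Φs (ft2 n ω) < Φs (ft1 n ω)} := by
    intro n
    rw [← prob_compl_eq_one_sub (hBmeas n)]
    exact measure_mono_ae ((hsub n).mono fun ω h => h)
  have hten : Tendsto (fun n => 1 - P (B n)) atTop (nhds 1) := by
    have h0 := hconv ε hεpos
    have := ENNReal.Tendsto.sub (tendsto_const_nhds (x := (1:ℝ≥0∞)))
      h0 (Or.inl ENNReal.one_ne_top)
    simpa [hBdef] using this
  exact tendsto_of_tendsto_of_tendsto_of_le_of_le hten tendsto_const_nhds hlow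
    (fun n => prob_le_one)
end

section
/- Consistent model comparison for classification (Theorem 4, classification part). Assume p_X and p_X̃ satisfy the (V, d)-fidelity level with 0 < d < ∞. Let η : 𝒳 → [0,1] be measurable, let G₁ and G₂ be sets of measurable functions, and for i = 1, 2 let g*_i ∈ G_i minimize Φ_{0-1} over G_i, with Φ_{0-1}(g*₂) < Φ_{0-1}(g*₁). Suppose K_{d,V}·Φ_{0-1}(g*₂)^{d²/(d+1)²} < Φ_{0-1}(g*₁), where K_{d,V} = (d^{1/(d+1)} + d^{−d/(d+1)})^{(2d+1)/(d+1)}·V^{(2d+1)/(d+1)²}. Let (η̂_n)_{n≥1} be random measurable functions from 𝒳 to [0,1] on a probability space (Ω, P) such that the real random variables ‖η̂_n − η‖_{L²(P_X)} are measurable and converge to 0 in probability as n → ∞. For each n and ω, let g̃*_{i,n,ω} ∈ G_i minimize Φ̃_{0-1}^{(n,ω)}(g) = ∫ 1{sign(g(x)) ≠ sign(η̂_n(ω)(x) − 1/2)}·|2η̂_n(ω)(x) − 1|·p_X̃(x) dx over G_i (i = 1, 2), and assume the events {ω : Φ_{0-1}(g̃*_{1,n,ω}) > Φ_{0-1}(g̃*_{2,n,ω})}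 are measurable. Then P( Φ_{0-1}(g̃*_{1,n}) > Φ_{0-1}(g̃*_{2,n}) ) → 1 as n → ∞. -/
open MeasureTheory Filter


section Stmt15Aux

variable {α : Type*} [MeasurableSpace α] {μ : Measure α} {S : Set α}

/-- pointwise 0-1 excess loss -/
noncomputable def stmt15loss (g e : α → ℝ) (x : α) : ℝ :=
  if (0 ≤ g x) ↔ (0 ≤ e x - 1 / 2) then (0 : ℝ) else |2 * e x - 1|

set_option linter.unusedSectionVars false

lemma stmt15loss_nonneg (g e : α → ℝ) (x : α) : 0 ≤ stmt15loss g e x := by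
  unfold stmt15loss; split_ifs <;> positivity

lemma stmt15loss_le_one {g e : α → ℝ} {x : α} (he : e x ∈ Set.Icc (0:ℝ) 1) :
    stmt15loss g e x ≤ 1 := by
  unfold stmt15loss; split_ifs
  · norm_num
  · obtain ⟨h0, h1⟩ := he
    rw [abs_le]; constructor <;> linarith

lemma stmt15measurable_loss {g e : α → ℝ} (hg : Measurable g) (he : Measurable e) :
    Measurable (stmt15loss g e) := by
  unfold stmt15loss
  have hset : MeasurableSet {x | (0 ≤ g x) ↔ (0 ≤ e x - 1 / 2)} := by
    have : {x | (0 ≤ g x) ↔ (0 ≤ e x - 1 / 2)} =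
        ({x | 0 ≤ g x} ∩ {x | 0 ≤ e x - 1/2}) ∪
        ({x | 0 ≤ g x}ᶜ ∩ {x | 0 ≤ e x - 1/2}ᶜ) := by
      ext x; simp only [Set.mem_setOf_eq, Set.mem_union, Set.mem_inter_iff, Set.mem_compl_iff,
        Set.mem_setOf_eq]
      tauto
    rw [this]
    have h1 : MeasurableSet {x | 0 ≤ g x} := measurableSet_le measurable_const hg
    have h2 : MeasurableSet {x | 0 ≤ e x - 1/2} :=
      measurableSet_le measurable_const (he.sub measurable_const)
    exact (h1.inter h2).union (h1.compl.inter h2.compl)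
  exact Measurable.ite hset measurable_const (((he.const_mul 2).sub measurable_const).abs)

lemma stmt15loss_lip (g e1 e2 : α → ℝ) (x : α) :
    stmt15loss g e1 x ≤ stmt15loss g e2 x + 2 * |e1 x - e2 x| := by
  unfold stmt15loss
  by_cases hg : 0 ≤ g x <;> by_cases h1 : 0 ≤ e1 x - 1/2 <;> by_cases h2 : 0 ≤ e2 x - 1/2 <;>
    simp only [hg, h1, h2, iff_true, iff_false, true_iff, false_iff, if_pos, if_neg,
      not_not, not_le, if_true, if_false] <;>
    rcases abs_cases (e1 x - e2 x) with ⟨ha, _⟩ | ⟨ha, _⟩ <;>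
    rcases abs_cases (2 * e1 x - 1) with ⟨hb, _⟩ | ⟨hb, _⟩ <;>
    rcases abs_cases (2 * e2 x - 1) with ⟨hc, _⟩ | ⟨hc, _⟩ <;>
    first
      | positivity
      | linarith

lemma stmt15integrableOn_mul {h p : α → ℝ} (hS : MeasurableSet S)
    (hh : Measurable h) (hp : Measurable p)
    (h0 : ∀ x ∈ S, 0 ≤ h x) (h1 : ∀ x ∈ S, h x ≤ 1)
    (hpint : IntegrableOn p S μ) : IntegrableOn (fun x => h x * p x) S μ := by
  refine Integrable.mono hpint ((hh.mul hp).aestronglyMeasurable) ?_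
  filter_upwards [ae_restrict_mem hS] with x hx
  rw [Real.norm_eq_abs, Real.norm_eq_abs, abs_mul]
  have hb : |h x| ≤ 1 := abs_le.mpr ⟨by linarith [h0 x hx], h1 x hx⟩
  calc |h x| * |p x| ≤ 1 * |p x| := mul_le_mul_of_nonneg_right hb (abs_nonneg _)
    _ = |p x| := one_mul _

lemma stmt15step (hS : MeasurableSet S) {p q h : α → ℝ}
    (hp : Measurable p) (hq : Measurable q) (hh : Measurable h)
    (hpnn : ∀ x ∈ S, 0 ≤ p x) (hqnn : ∀ x ∈ S, 0 ≤ q x)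
    (hp_int : IntegrableOn p S μ) (hq_int : IntegrableOn q S μ)
    (h0 : ∀ x ∈ S, 0 ≤ h x) (h1 : ∀ x ∈ S, h x ≤ 1)
    {V d C : ℝ} (hC : 0 < C)
    (hfid : (∫ x in {x ∈ S | C * q x ≤ p x}, p x ∂μ) ≤ V * C ^ (-d)) :
    (∫ x in S, h x * p x ∂μ) ≤ C * (∫ x in S, h x * q x ∂μ) + V * C ^ (-d) := by
  set A : Set α := {x ∈ S | C * q x ≤ p x} with hAdef
  have hA : MeasurableSet A := hS.inter (measurableSet_le (hq.const_mul C) hp)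
  have hAsub : A ⊆ S := fun x hx => hx.1
  have hhp_int : IntegrableOn (fun x => h x * p x) S μ :=
    stmt15integrableOn_mul hS hh hp h0 h1 hp_int
  have hhq_int : IntegrableOn (fun x => h x * q x) S μ :=
    stmt15integrableOn_mul hS hh hq h0 h1 hq_int
  have hsplit : (∫ x in S, h x * p x ∂μ)
      = (∫ x in A, h x * p x ∂μ) + ∫ x in S \ A, h x * p x ∂μ := by
    rw [← setIntegral_union (Set.disjoint_sdiff_right) (hS.diff hA)
        (hhp_int.mono_set hAsub) (hhp_int.mono_set Set.diff_subset),
      Set.union_diff_cancel hAsub]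
  have hb1 : (∫ x in A, h x * p x ∂μ) ≤ V * C ^ (-d) := by
    refine le_trans ?_ hfid
    refine setIntegral_mono_on (hhp_int.mono_set hAsub) (hp_int.mono_set hAsub) hA ?_
    intro x hx
    calc h x * p x ≤ 1 * p x := mul_le_mul_of_nonneg_right (h1 x hx.1) (hpnn x hx.1)
      _ = p x := one_mul _
  have hb2 : (∫ x in S \ A, h x * p x ∂μ) ≤ C * ∫ x in S, h x * q x ∂μ := by
    have hmono : (∫ x in S \ A, h x * p x ∂μ) ≤ ∫ x in S \ A, C * (h x * q x) ∂μ := by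
      refine setIntegral_mono_on (hhp_int.mono_set Set.diff_subset)
        (IntegrableOn.mono_set (hhq_int.const_mul C) Set.diff_subset) (hS.diff hA) ?_
      intro x hx
      have hxS : x ∈ S := hx.1
      have hlt : p x < C * q x := by
        by_contra hcon
        exact hx.2 ⟨hxS, not_lt.mp hcon⟩
      calc h x * p x ≤ h x * (C * q x) := mul_le_mul_of_nonneg_left hlt.le (h0 x hxS)
        _ = C * (h x * q x) := by ring
    rw [MeasureTheory.integral_const_mul] at hmono
    refine hmono.trans (mul_le_mul_of_nonneg_left ?_ hC.le)
    refine setIntegral_mono_set hhq_int ?_ (HasSubset.Subset.eventuallyLE Set.diff_subset)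
    filter_upwards [ae_restrict_mem hS] with x hx
    exact mul_nonneg (h0 x hx) (hqnn x hx)
  linarith

lemma stmt15alg {d V B : ℝ} (hd : 0 < d) (hV : 0 < V) (hB : 0 < B) :
    (d * V / B) ^ (1/(d+1)) * B + V * ((d * V / B) ^ (1/(d+1))) ^ (-d)
      = ((d ^ (1/(d+1)) + d ^ (-(d/(d+1)))) * V ^ (1/(d+1))) * B ^ (d/(d+1)) := by
  have hd1 : (0:ℝ) < d + 1 := by linarith
  have hx : (0:ℝ) < d * V / B := by positivity
  set a := Real.log d with ha
  set b := Real.log V with hb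
  set c := Real.log B with hc
  have hlog : Real.log (d * V / B) = a + b - c := by
    rw [Real.log_div (by positivity) hB.ne', Real.log_mul hd.ne' hV.ne']
  rw [Real.rpow_def_of_pos hx, hlog]
  rw [Real.rpow_def_of_pos (Real.exp_pos _), Real.log_exp]
  rw [Real.rpow_def_of_pos hd, Real.rpow_def_of_pos hd, Real.rpow_def_of_pos hV,
    Real.rpow_def_of_pos hB]
  rw [show B = Real.exp c by rw [hc, Real.exp_log hB], show V = Real.exp b by
    rw [hb, Real.exp_log hV]]
  rw [← Real.exp_add, ← Real.exp_add, add_mul, ← Real.exp_add, ← Real.exp_add]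
  rw [show ((a + b - c) * (1/(d+1)) + c) = (a * (1/(d+1)) + b * (1/(d+1)) + c * (d/(d+1)))
      from by field_simp; ring]
  rw [show (b + (a + b - c) * (1/(d+1)) * (-d)) = (a * (-(d/(d+1))) + b * (1/(d+1)) + c * (d/(d+1)))
      from by field_simp; ring]
  rw [Real.log_exp, Real.log_exp, add_mul, ← Real.exp_add, ← Real.exp_add]

/-- optimized transfer inequality -/
lemma stmt15transfer (hS : MeasurableSet S) {p q h : α → ℝ}
    (hp : Measurable p) (hq : Measurable q) (hh : Measurable h)
    (hpnn : ∀ x ∈ S, 0 ≤ p x) (hqnn : ∀ x ∈ S, 0 ≤ q x)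
    (hp_int : IntegrableOn p S μ) (hq_int : IntegrableOn q S μ)
    (h0 : ∀ x ∈ S, 0 ≤ h x) (h1 : ∀ x ∈ S, h x ≤ 1)
    {V d : ℝ} (hV : 0 ≤ V) (hd : 0 < d)
    (hfid : ∀ C : ℝ, 0 < C → (∫ x in {x ∈ S | C * q x ≤ p x}, p x ∂μ) ≤ V * C ^ (-d)) :
    (∫ x in S, h x * p x ∂μ) ≤
      ((d ^ (1/(d+1)) + d ^ (-(d/(d+1)))) * V ^ (1/(d+1)))
        * (∫ x in S, h x * q x ∂μ) ^ (d/(d+1)) := by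
  have hd1 : (0:ℝ) < d + 1 := by linarith
  set B := ∫ x in S, h x * q x ∂μ with hBdef
  have hB0 : 0 ≤ B :=
    setIntegral_nonneg hS (fun x hx => mul_nonneg (h0 x hx) (hqnn x hx))
  rcases eq_or_lt_of_le hV with hV0 | hVpos
  · -- V = 0
    have hκ : ((d ^ (1/(d+1)) + d ^ (-(d/(d+1)))) * V ^ (1/(d+1))) * B ^ (d/(d+1)) = 0 := by
      rw [← hV0, Real.zero_rpow (by positivity : (1:ℝ)/(d+1) ≠ 0)]
      ring
    rw [hκ]
    refine ge_of_tendsto (f := fun C : ℝ => C * B + V * C ^ (-d))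
      (x := nhdsWithin 0 (Set.Ioi 0)) ?_ ?_
    · have : Tendsto (fun C : ℝ => C * B + V * C ^ (-d)) (nhdsWithin 0 (Set.Ioi 0))
          (nhds (0 * B + 0)) := by
        refine Tendsto.add ?_ ?_
        · exact (tendsto_id.mono_left nhdsWithin_le_nhds).mul_const B
        · refine tendsto_const_nhds.congr' ?_
          filter_upwards [self_mem_nhdsWithin] with C hC
          rw [← hV0]; ring
      simpa using this
    · filter_upwards [self_mem_nhdsWithin] with C hC
      exact stmt15step hS hp hq hh hpnn hqnn hp_int hq_int h0 h1 hC (hfid C hC)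
  · -- V > 0
    have key : ∀ ε : ℝ, 0 < ε → (∫ x in S, h x * p x ∂μ) ≤
        ((d ^ (1/(d+1)) + d ^ (-(d/(d+1)))) * V ^ (1/(d+1))) * (B + ε) ^ (d/(d+1)) := by
      intro ε hε
      have hBε : 0 < B + ε := by linarith
      set C := (d * V / (B + ε)) ^ ((1:ℝ)/(d+1)) with hCdef
      have hC : 0 < C := Real.rpow_pos_of_pos (by positivity) _
      calc (∫ x in S, h x * p x ∂μ) ≤ C * B + V * C ^ (-d) :=
            stmt15step hS hp hq hh hpnn hqnn hp_int hq_int h0 h1 hC (hfid C hC)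
        _ ≤ C * (B + ε) + V * C ^ (-d) := by nlinarith
        _ = _ := stmt15alg hd hVpos hBε
    refine ge_of_tendsto (f := fun ε : ℝ =>
      ((d ^ (1/(d+1)) + d ^ (-(d/(d+1)))) * V ^ (1/(d+1))) * (B + ε) ^ (d/(d+1)))
      (x := nhdsWithin 0 (Set.Ioi 0)) ?_ ?_
    · have h1' : Tendsto (fun ε : ℝ => B + ε) (nhdsWithin 0 (Set.Ioi 0)) (nhds (B + 0)) :=
        (tendsto_const_nhds.add (tendsto_id.mono_left nhdsWithin_le_nhds))
      have h2' := (h1'.rpow_const (p := d/(d+1)) (Or.inr (by positivity))).const_mul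
        ((d ^ (1/(d+1)) + d ^ (-(d/(d+1)))) * V ^ (1/(d+1)))
      simpa using h2'
    · filter_upwards [self_mem_nhdsWithin] with ε hε
      exact key ε hε

/-- Cauchy–Schwarz via variance trick -/
lemma stmt15cs (hS : MeasurableSet S) {f p : α → ℝ} (hf : Measurable f) (hp : Measurable p)
    (hf1 : ∀ x ∈ S, |f x| ≤ 1) (hpnn : ∀ x ∈ S, 0 ≤ p x)
    (hpint : IntegrableOn p S μ) (hpone : (∫ x in S, p x ∂μ) = 1) :
    (∫ x in S, |f x| * p x ∂μ) ≤ Real.sqrt (∫ x in S, (f x) ^ 2 * p x ∂μ) := by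
  set t := ∫ x in S, |f x| * p x ∂μ with htdef
  have ht0 : 0 ≤ t :=
    setIntegral_nonneg hS (fun x hx => mul_nonneg (abs_nonneg _) (hpnn x hx))
  have hint1 : IntegrableOn (fun x => |f x| * p x) S μ := by
    refine Integrable.mono hpint ((hf.abs.mul hp).aestronglyMeasurable) ?_
    filter_upwards [ae_restrict_mem hS] with x hx
    rw [Real.norm_eq_abs, Real.norm_eq_abs, abs_mul, abs_abs]
    calc |f x| * |p x| ≤ 1 * |p x| := mul_le_mul_of_nonneg_right (hf1 x hx) (abs_nonneg _)
      _ = |p x| := one_mul _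
  have hint2 : IntegrableOn (fun x => f x ^ 2 * p x) S μ := by
    refine Integrable.mono hpint (((hf.pow_const 2).mul hp).aestronglyMeasurable) ?_
    filter_upwards [ae_restrict_mem hS] with x hx
    rw [Real.norm_eq_abs, Real.norm_eq_abs, abs_mul]
    have hb : |f x ^ 2| ≤ 1 := by
      rw [abs_pow]
      calc |f x| ^ 2 ≤ 1 ^ 2 := pow_le_pow_left₀ (abs_nonneg _) (hf1 x hx) 2
        _ = 1 := one_pow 2
    calc |f x ^ 2| * |p x| ≤ 1 * |p x| := mul_le_mul_of_nonneg_right hb (abs_nonneg _)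
      _ = |p x| := one_mul _
  have hptwise : ∀ x : α, (|f x| - t) ^ 2 * p x
      = f x ^ 2 * p x - (2 * t) * (|f x| * p x) + t ^ 2 * p x := by
    intro x
    linear_combination p x * sq_abs (f x)
  have key : 0 ≤ ∫ x in S, (|f x| - t) ^ 2 * p x ∂μ :=
    setIntegral_nonneg hS (fun x hx => mul_nonneg (sq_nonneg _) (hpnn x hx))
  have expand : (∫ x in S, (|f x| - t) ^ 2 * p x ∂μ)
      = (∫ x in S, f x ^ 2 * p x ∂μ) - (2 * t) * t + t ^ 2 := by
    simp only [hptwise]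
    have hIa : Integrable (fun x => f x ^ 2 * p x - 2 * t * (|f x| * p x)) (μ.restrict S) :=
      hint2.sub (hint1.const_mul (2*t))
    have hIb : Integrable (fun x => t ^ 2 * p x) (μ.restrict S) := hpint.const_mul (t^2)
    rw [integral_add hIa hIb, integral_sub hint2 (hint1.const_mul (2*t)),
      MeasureTheory.integral_const_mul, MeasureTheory.integral_const_mul, hpone, ← htdef]
    ring
  have hsq : t ^ 2 ≤ ∫ x in S, f x ^ 2 * p x ∂μ := by nlinarith
  exact (Real.le_sqrt ht0 (le_trans (by positivity) hsq)).mpr hsq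

/-- integrated Lipschitz bound for the loss -/
lemma stmt15loss_int_le (hS : MeasurableSet S) {l1 l2 fd q : α → ℝ}
    (hl1 : Measurable l1) (hl2 : Measurable l2) (hfd : Measurable fd) (hq : Measurable q)
    (hl1b : ∀ x ∈ S, 0 ≤ l1 x ∧ l1 x ≤ 1) (hl2b : ∀ x ∈ S, 0 ≤ l2 x ∧ l2 x ≤ 1)
    (hfdb : ∀ x ∈ S, 0 ≤ fd x ∧ fd x ≤ 1)
    (hlip : ∀ x ∈ S, l1 x ≤ l2 x + 2 * fd x)
    (hqnn : ∀ x ∈ S, 0 ≤ q x) (hq_int : IntegrableOn q S μ) :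
    (∫ x in S, l1 x * q x ∂μ) ≤ (∫ x in S, l2 x * q x ∂μ) + 2 * ∫ x in S, fd x * q x ∂μ := by
  have int1 : IntegrableOn (fun x => l1 x * q x) S μ :=
    stmt15integrableOn_mul hS hl1 hq (fun x hx => (hl1b x hx).1) (fun x hx => (hl1b x hx).2) hq_int
  have int2 : IntegrableOn (fun x => l2 x * q x) S μ :=
    stmt15integrableOn_mul hS hl2 hq (fun x hx => (hl2b x hx).1) (fun x hx => (hl2b x hx).2) hq_int
  have int3 : IntegrableOn (fun x => fd x * q x) S μ :=
    stmt15integrableOn_mul hS hfd hq (fun x hx => (hfdb x hx).1) (fun x hx => (hfdb x hx).2) hq_int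
  have hmono : (∫ x in S, l1 x * q x ∂μ) ≤ ∫ x in S, (l2 x * q x + 2 * (fd x * q x)) ∂μ := by
    refine setIntegral_mono_on int1 (int2.add (int3.const_mul 2)) hS ?_
    intro x hx
    have h := hlip x hx
    have hq0 := hqnn x hx
    nlinarith
  rw [integral_add int2 (int3.const_mul 2), MeasureTheory.integral_const_mul] at hmono
  exact hmono

end Stmt15Aux
/-- **Consistent model comparison for classification (Theorem 4, classification
part).**  `sign(t) = 1` when `t ≥ 0` and `−1` otherwise; the excess 0-1 risk is
`Φ_{0-1}(g) = ∫ 1{sign(g) ≠ sign(η − 1/2)} |2η − 1| p_X`.  `g1`, `g2` minimize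
`Φ_{0-1}` over `G₁`, `G₂` with `Φ_{0-1}(g2) < Φ_{0-1}(g1)` and the gap condition
`K_{d,V} Φ_{0-1}(g2)^{d²/(d+1)²} < Φ_{0-1}(g1)`; `‖η̂_n − η‖_{L²(P_X)} → 0` in
probability; and `gt1 n ω`, `gt2 n ω` minimize the synthetic excess risk
`Φ̃_{0-1}^{(n,ω)}` (built from `η̂_n(ω)` and `p_X̃`) over `G₁`, `G₂`.  Then
`P(Φ_{0-1}(gt2 n) < Φ_{0-1}(gt1 n)) → 1`. -/
theorem stmt15
    {k : ℕ} (𝒳 : Set (Fin k → ℝ)) (h𝒳 : MeasurableSet 𝒳)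
    (pX pXt : (Fin k → ℝ) → ℝ)
    (hpX_meas : Measurable pX) (hpXt_meas : Measurable pXt)
    (hpX_nonneg : ∀ x ∈ 𝒳, 0 ≤ pX x) (hpXt_nonneg : ∀ x ∈ 𝒳, 0 ≤ pXt x)
    (hpX_int : IntegrableOn pX 𝒳) (hpXt_int : IntegrableOn pXt 𝒳)
    (hpX_one : (∫ x in 𝒳, pX x) = 1) (hpXt_one : (∫ x in 𝒳, pXt x) = 1)
    (V d : ℝ) (hV : 0 ≤ V) (hd : 0 < d)
    -- (V, d)-fidelity level
    (hfid : ∀ C : ℝ, 0 < C →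
      (∫ x in {x ∈ 𝒳 | C * pXt x ≤ pX x}, pX x) ≤ V * C ^ (-d) ∧
      (∫ x in {x ∈ 𝒳 | C * pX x ≤ pXt x}, pXt x) ≤ V * C ^ (-d))
    (η : (Fin k → ℝ) → ℝ) (hη : Measurable η)
    (hη01 : ∀ x ∈ 𝒳, η x ∈ Set.Icc (0 : ℝ) 1)
    (G1 G2 : Set ((Fin k → ℝ) → ℝ))
    (hG1 : ∀ g ∈ G1, Measurable g) (hG2 : ∀ g ∈ G2, Measurable g)
    -- excess 0-1 risk under the original distribution
    (Φ01 : ((Fin k → ℝ) → ℝ) → ℝ)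
    (hΦ01 : ∀ g, Φ01 g =
      ∫ x in 𝒳, (if (0 ≤ g x) ↔ (0 ≤ η x - 1 / 2) then (0 : ℝ) else |2 * η x - 1|) * pX x)
    (g1 g2 : (Fin k → ℝ) → ℝ) (hg1 : g1 ∈ G1) (hg2 : g2 ∈ G2)
    (hg1_min : ∀ g ∈ G1, Φ01 g1 ≤ Φ01 g) (hg2_min : ∀ g ∈ G2, Φ01 g2 ≤ Φ01 g)
    (hlt : Φ01 g2 < Φ01 g1)
    -- gap condition: K_{d,V} Φ_{0-1}(g*₂)^{d²/(d+1)²} < Φ_{0-1}(g*₁)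
    (hgap : ((d ^ (1 / (d + 1)) + d ^ (-(d / (d + 1)))) ^ ((2 * d + 1) / (d + 1))
          * V ^ ((2 * d + 1) / (d + 1) ^ 2)) * Φ01 g2 ^ (d ^ 2 / (d + 1) ^ 2) < Φ01 g1)
    -- the sequence of estimates η̂_n on a probability space (Ω, P)
    {Ω : Type*} [MeasurableSpace Ω] (P : Measure Ω) [IsProbabilityMeasure P]
    (ηhat : ℕ → Ω → (Fin k → ℝ) → ℝ)
    (hηhat_mble : ∀ n ω, Measurable (ηhat n ω))
    (hηhat01 : ∀ n ω, ∀ x ∈ 𝒳, ηhat n ω x ∈ Set.Icc (0 : ℝ) 1)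
    (hnorm_meas : ∀ n, Measurable fun ω =>
      Real.sqrt (∫ x in 𝒳, (ηhat n ω x - η x) ^ 2 * pX x))
    -- ‖η̂_n − η‖_{L²(P_X)} → 0 in probability
    (hconv : ∀ ε : ℝ, 0 < ε →
      Tendsto (fun n => P {ω | ε <
          Real.sqrt (∫ x in 𝒳, (ηhat n ω x - η x) ^ 2 * pX x)}) atTop (nhds 0))
    -- minimizers of the synthetic excess risk over G₁ and G₂
    (gt1 gt2 : ℕ → Ω → (Fin k → ℝ) → ℝ)
    (hgt1 : ∀ n ω, gt1 n ω ∈ G1 ∧ ∀ g ∈ G1,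
      (∫ x in 𝒳, (if (0 ≤ gt1 n ω x) ↔ (0 ≤ ηhat n ω x - 1 / 2) then (0 : ℝ)
          else |2 * ηhat n ω x - 1|) * pXt x) ≤
        ∫ x in 𝒳, (if (0 ≤ g x) ↔ (0 ≤ ηhat n ω x - 1 / 2) then (0 : ℝ)
          else |2 * ηhat n ω x - 1|) * pXt x)
    (hgt2 : ∀ n ω, gt2 n ω ∈ G2 ∧ ∀ g ∈ G2,
      (∫ x in 𝒳, (if (0 ≤ gt2 n ω x) ↔ (0 ≤ ηhat n ω x - 1 / 2) then (0 : ℝ)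
          else |2 * ηhat n ω x - 1|) * pXt x) ≤
        ∫ x in 𝒳, (if (0 ≤ g x) ↔ (0 ≤ ηhat n ω x - 1 / 2) then (0 : ℝ)
          else |2 * ηhat n ω x - 1|) * pXt x)
    -- measurability of the comparison events
    (hevent : ∀ n, MeasurableSet {ω | Φ01 (gt2 n ω) < Φ01 (gt1 n ω)}) :
    Tendsto (fun n => P {ω | Φ01 (gt2 n ω) < Φ01 (gt1 n ω)}) atTop (nhds 1) := by
  classical
  have hd1 : (0:ℝ) < d + 1 := by linarith
  have hr0 : (0:ℝ) < d / (d + 1) := div_pos hd hd1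
  -- the constant κ
  obtain ⟨κ, hκdef⟩ : ∃ κ : ℝ,
      κ = (d ^ (1/(d+1)) + d ^ (-(d/(d+1)))) * V ^ (1/(d+1)) := ⟨_, rfl⟩
  obtain ⟨r, hrdef⟩ : ∃ r : ℝ, r = d / (d + 1) := ⟨_, rfl⟩
  have hr0 : 0 < r := hrdef ▸ hr0
  have hκ0 : 0 ≤ κ := by
    rw [hκdef]
    have h1 : (0:ℝ) ≤ d ^ ((1:ℝ)/(d+1)) := Real.rpow_nonneg hd.le _
    have h2 : (0:ℝ) ≤ d ^ (-(d/(d+1))) := Real.rpow_nonneg hd.le _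
    have h3 : (0:ℝ) ≤ V ^ ((1:ℝ)/(d+1)) := Real.rpow_nonneg hV _
    positivity
  -- transfer inequalities in both directions
  have trans1 : ∀ h : (Fin k → ℝ) → ℝ, Measurable h → (∀ x ∈ 𝒳, 0 ≤ h x) →
      (∀ x ∈ 𝒳, h x ≤ 1) →
      (∫ x in 𝒳, h x * pX x) ≤ κ * (∫ x in 𝒳, h x * pXt x) ^ r := by
    intro h hm h0 h1
    rw [hκdef, hrdef]
    exact stmt15transfer h𝒳 hpX_meas hpXt_meas hm hpX_nonneg hpXt_nonneg hpX_int hpXt_int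
      h0 h1 hV hd (fun C hC => (hfid C hC).1)
  have trans2 : ∀ h : (Fin k → ℝ) → ℝ, Measurable h → (∀ x ∈ 𝒳, 0 ≤ h x) →
      (∀ x ∈ 𝒳, h x ≤ 1) →
      (∫ x in 𝒳, h x * pXt x) ≤ κ * (∫ x in 𝒳, h x * pX x) ^ r := by
    intro h hm h0 h1
    rw [hκdef, hrdef]
    exact stmt15transfer h𝒳 hpXt_meas hpX_meas hm hpXt_nonneg hpX_nonneg hpXt_int hpX_int
      h0 h1 hV hd (fun C hC => (hfid C hC).2)
  have hA2nn : 0 ≤ Φ01 g2 := by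
    rw [hΦ01 g2]
    exact setIntegral_nonneg h𝒳
      (fun x hx => mul_nonneg (stmt15loss_nonneg g2 η x) (hpX_nonneg x hx))
  -- rewrite the gap hypothesis using κ and r
  have hK : ((d ^ (1 / (d + 1)) + d ^ (-(d / (d + 1)))) ^ ((2 * d + 1) / (d + 1))
      * V ^ ((2 * d + 1) / (d + 1) ^ 2)) * Φ01 g2 ^ (d ^ 2 / (d + 1) ^ 2)
      = κ * (κ * Φ01 g2 ^ r) ^ r := by
    have hcnn : (0:ℝ) ≤ d ^ ((1:ℝ)/(d+1)) + d ^ (-(d/(d+1))) := by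
      have h1 : (0:ℝ) ≤ d ^ ((1:ℝ)/(d+1)) := Real.rpow_nonneg hd.le _
      have h2 : (0:ℝ) ≤ d ^ (-(d/(d+1))) := Real.rpow_nonneg hd.le _
      linarith
    have hVs : (0:ℝ) ≤ V ^ ((1:ℝ)/(d+1)) := Real.rpow_nonneg hV _
    have e1 : κ * (κ * Φ01 g2 ^ r) ^ r = (κ * κ ^ r) * Φ01 g2 ^ (r * r) := by
      rw [Real.mul_rpow hκ0 (Real.rpow_nonneg hA2nn _), ← Real.rpow_mul hA2nn]
      ring
    have e2 : κ * κ ^ r = κ ^ (1 + r) := by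
      rw [Real.rpow_add' hκ0 (by positivity), Real.rpow_one]
    have e3 : κ ^ (1 + r) = (d ^ ((1:ℝ)/(d+1)) + d ^ (-(d/(d+1)))) ^ (1 + r)
        * V ^ ((1/(d+1)) * (1 + r)) := by
      rw [hκdef, Real.mul_rpow hcnn hVs, ← Real.rpow_mul hV]
    have hexp1 : 1 + r = (2 * d + 1) / (d + 1) := by
      rw [hrdef]; field_simp; ring
    have hexp2 : (1/(d+1)) * (1 + r) = (2 * d + 1) / (d + 1) ^ 2 := by
      rw [hrdef]; field_simp; ring
    have hexp3 : r * r = d ^ 2 / (d + 1) ^ 2 := by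
      rw [hrdef]; field_simp
    rw [e1, e2, e3, hexp2, hexp1, hexp3]
  rw [hK] at hgap
  -- choose δ
  obtain ⟨δ, hδpos, hδlt⟩ : ∃ δ : ℝ, 0 < δ ∧
      κ * (κ * Φ01 g2 ^ r + 4 * (κ * δ ^ r)) ^ r < Φ01 g1 := by
    have t0 : Tendsto (fun ε : ℝ => ε ^ r) (nhdsWithin 0 (Set.Ioi 0)) (nhds 0) := by
      have := (tendsto_id.mono_left nhdsWithin_le_nhds :
        Tendsto (fun ε : ℝ => ε) (nhdsWithin 0 (Set.Ioi 0)) (nhds 0)).rpow_const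
        (p := r) (Or.inr hr0.le)
      rwa [Real.zero_rpow hr0.ne'] at this
    have tin : Tendsto (fun ε : ℝ => κ * Φ01 g2 ^ r + 4 * (κ * ε ^ r))
        (nhdsWithin 0 (Set.Ioi 0)) (nhds (κ * Φ01 g2 ^ r)) := by
      have h2 : Tendsto (fun ε : ℝ => κ * Φ01 g2 ^ r + 4 * (κ * ε ^ r))
          (nhdsWithin 0 (Set.Ioi 0)) (nhds (κ * Φ01 g2 ^ r + 4 * (κ * 0))) :=
        tendsto_const_nhds.add ((t0.const_mul κ).const_mul 4)
      simpa using h2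
    have tF : Tendsto (fun ε : ℝ => κ * (κ * Φ01 g2 ^ r + 4 * (κ * ε ^ r)) ^ r)
        (nhdsWithin 0 (Set.Ioi 0)) (nhds (κ * (κ * Φ01 g2 ^ r) ^ r)) := by
      have hnn : 0 ≤ κ * Φ01 g2 ^ r := mul_nonneg hκ0 (Real.rpow_nonneg hA2nn _)
      rcases eq_or_lt_of_le hnn with hz | hpos
      · -- the base tends to 0 ≥ 0; still fine since r > 0
        exact (tin.rpow_const (Or.inr hr0.le)).const_mul κ
      · exact (tin.rpow_const (Or.inr hr0.le)).const_mul κ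
    have hev := tF.eventually_lt_const hgap
    obtain ⟨δ, hδ1, hδ2⟩ := (hev.and self_mem_nhdsWithin).exists
    exact ⟨δ, hδ2, hδ1⟩
  -- core pointwise implication
  have core : ∀ n ω,
      Real.sqrt (∫ x in 𝒳, (ηhat n ω x - η x) ^ 2 * pX x) ≤ δ →
      Φ01 (gt2 n ω) < Φ01 (gt1 n ω) := by
    intro n ω hsm
    have he : Measurable (ηhat n ω) := hηhat_mble n ω
    obtain ⟨hgt2mem, hgt2min⟩ := hgt2 n ω
    have hgt2meas : Measurable (gt2 n ω) := hG2 _ hgt2mem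
    have hg2meas : Measurable g2 := hG2 _ hg2
    -- the difference function
    have hfm : Measurable (fun x => |ηhat n ω x - η x|) := (he.sub hη).abs
    have hf0 : ∀ x ∈ 𝒳, 0 ≤ |ηhat n ω x - η x| := fun x _ => abs_nonneg _
    have hf1 : ∀ x ∈ 𝒳, |ηhat n ω x - η x| ≤ 1 := by
      intro x hx
      obtain ⟨ha1, ha2⟩ := hηhat01 n ω x hx
      obtain ⟨hb1, hb2⟩ := hη01 x hx
      rw [abs_le]; constructor <;> linarith
    have hI : (∫ x in 𝒳, |ηhat n ω x - η x| * pX x) ≤ δ :=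
      le_trans (stmt15cs h𝒳 (he.sub hη) hpX_meas hf1 hpX_nonneg hpX_int hpX_one) hsm
    have hInn : 0 ≤ ∫ x in 𝒳, |ηhat n ω x - η x| * pX x :=
      setIntegral_nonneg h𝒳 (fun x hx => mul_nonneg (abs_nonneg _) (hpX_nonneg x hx))
    have hJ : (∫ x in 𝒳, |ηhat n ω x - η x| * pXt x) ≤ κ * δ ^ r := by
      refine le_trans (trans2 _ hfm hf0 hf1) ?_
      exact mul_le_mul_of_nonneg_left (Real.rpow_le_rpow hInn hI hr0.le) hκ0
    -- loss bounds
    have lb1 : ∀ x ∈ 𝒳, 0 ≤ stmt15loss (gt2 n ω) η x ∧ stmt15loss (gt2 n ω) η x ≤ 1 :=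
      fun x hx => ⟨stmt15loss_nonneg _ _ x, stmt15loss_le_one (hη01 x hx)⟩
    have lb2 : ∀ x ∈ 𝒳, 0 ≤ stmt15loss (gt2 n ω) (ηhat n ω) x ∧
        stmt15loss (gt2 n ω) (ηhat n ω) x ≤ 1 :=
      fun x hx => ⟨stmt15loss_nonneg _ _ x, stmt15loss_le_one (hηhat01 n ω x hx)⟩
    have lb3 : ∀ x ∈ 𝒳, 0 ≤ stmt15loss g2 η x ∧ stmt15loss g2 η x ≤ 1 :=
      fun x hx => ⟨stmt15loss_nonneg _ _ x, stmt15loss_le_one (hη01 x hx)⟩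
    have lb4 : ∀ x ∈ 𝒳, 0 ≤ stmt15loss g2 (ηhat n ω) x ∧ stmt15loss g2 (ηhat n ω) x ≤ 1 :=
      fun x hx => ⟨stmt15loss_nonneg _ _ x, stmt15loss_le_one (hηhat01 n ω x hx)⟩
    have lfb : ∀ x ∈ 𝒳, 0 ≤ |ηhat n ω x - η x| ∧ |ηhat n ω x - η x| ≤ 1 :=
      fun x hx => ⟨abs_nonneg _, hf1 x hx⟩
    have m1 : Measurable (stmt15loss (gt2 n ω) η) := stmt15measurable_loss hgt2meas hη
    have m2 : Measurable (stmt15loss (gt2 n ω) (ηhat n ω)) := stmt15measurable_loss hgt2meas he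
    have m3 : Measurable (stmt15loss g2 η) := stmt15measurable_loss hg2meas hη
    have m4 : Measurable (stmt15loss g2 (ηhat n ω)) := stmt15measurable_loss hg2meas he
    -- chain of inequalities
    have c1 : (∫ x in 𝒳, stmt15loss (gt2 n ω) η x * pX x)
        ≤ κ * (∫ x in 𝒳, stmt15loss (gt2 n ω) η x * pXt x) ^ r :=
      trans1 _ m1 (fun x hx => (lb1 x hx).1) (fun x hx => (lb1 x hx).2)
    have c2 : (∫ x in 𝒳, stmt15loss (gt2 n ω) η x * pXt x)
        ≤ (∫ x in 𝒳, stmt15loss (gt2 n ω) (ηhat n ω) x * pXt x)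
          + 2 * ∫ x in 𝒳, |ηhat n ω x - η x| * pXt x := by
      refine stmt15loss_int_le h𝒳 m1 m2 hfm hpXt_meas lb1 lb2 lfb ?_ hpXt_nonneg hpXt_int
      intro x hx
      have h := stmt15loss_lip (gt2 n ω) η (ηhat n ω) x
      rwa [abs_sub_comm] at h
    have c3 : (∫ x in 𝒳, stmt15loss (gt2 n ω) (ηhat n ω) x * pXt x)
        ≤ ∫ x in 𝒳, stmt15loss g2 (ηhat n ω) x * pXt x := hgt2min g2 hg2
    have c4 : (∫ x in 𝒳, stmt15loss g2 (ηhat n ω) x * pXt x)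
        ≤ (∫ x in 𝒳, stmt15loss g2 η x * pXt x)
          + 2 * ∫ x in 𝒳, |ηhat n ω x - η x| * pXt x := by
      refine stmt15loss_int_le h𝒳 m4 m3 hfm hpXt_meas lb4 lb3 lfb ?_ hpXt_nonneg hpXt_int
      intro x hx
      exact stmt15loss_lip g2 (ηhat n ω) η x
    have c5 : (∫ x in 𝒳, stmt15loss g2 η x * pXt x)
        ≤ κ * (∫ x in 𝒳, stmt15loss g2 η x * pX x) ^ r :=
      trans2 _ m3 (fun x hx => (lb3 x hx).1) (fun x hx => (lb3 x hx).2)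
    have hA2eq : Φ01 g2 = ∫ x in 𝒳, stmt15loss g2 η x * pX x := hΦ01 g2
    have hB : (∫ x in 𝒳, stmt15loss (gt2 n ω) η x * pXt x)
        ≤ κ * (∫ x in 𝒳, stmt15loss g2 η x * pX x) ^ r + 4 * (κ * δ ^ r) := by
      linarith
    have hBnn : 0 ≤ ∫ x in 𝒳, stmt15loss (gt2 n ω) η x * pXt x :=
      setIntegral_nonneg h𝒳
        (fun x hx => mul_nonneg (stmt15loss_nonneg _ _ x) (hpXt_nonneg x hx))
    have hmain : Φ01 (gt2 n ω)
        ≤ κ * (κ * (∫ x in 𝒳, stmt15loss g2 η x * pX x) ^ r + 4 * (κ * δ ^ r)) ^ r := by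
      have h1 : Φ01 (gt2 n ω) = ∫ x in 𝒳, stmt15loss (gt2 n ω) η x * pX x := hΦ01 (gt2 n ω)
      rw [h1]
      refine le_trans c1 (mul_le_mul_of_nonneg_left ?_ hκ0)
      exact Real.rpow_le_rpow hBnn hB hr0.le
    rw [← hA2eq] at hmain
    have hgt1le : Φ01 g1 ≤ Φ01 (gt1 n ω) := hg1_min _ (hgt1 n ω).1
    linarith
  -- final limit argument
  have hmeasn : ∀ n, MeasurableSet
      {ω | δ < Real.sqrt (∫ x in 𝒳, (ηhat n ω x - η x) ^ 2 * pX x)} :=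
    fun n => (hnorm_meas n) measurableSet_Ioi
  have hlow : ∀ n, 1 - P {ω | δ < Real.sqrt (∫ x in 𝒳, (ηhat n ω x - η x) ^ 2 * pX x)}
      ≤ P {ω | Φ01 (gt2 n ω) < Φ01 (gt1 n ω)} := by
    intro n
    have hcompl : {ω | Real.sqrt (∫ x in 𝒳, (ηhat n ω x - η x) ^ 2 * pX x) ≤ δ}
        = {ω | δ < Real.sqrt (∫ x in 𝒳, (ηhat n ω x - η x) ^ 2 * pX x)}ᶜ := by
      ext ω; simp [not_lt]
    have h1 : P {ω | Real.sqrt (∫ x in 𝒳, (ηhat n ω x - η x) ^ 2 * pX x) ≤ δ}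
        = 1 - P {ω | δ < Real.sqrt (∫ x in 𝒳, (ηhat n ω x - η x) ^ 2 * pX x)} := by
      rw [hcompl, prob_compl_eq_one_sub (hmeasn n)]
    calc 1 - P {ω | δ < Real.sqrt (∫ x in 𝒳, (ηhat n ω x - η x) ^ 2 * pX x)}
        = P {ω | Real.sqrt (∫ x in 𝒳, (ηhat n ω x - η x) ^ 2 * pX x) ≤ δ} := h1.symm
      _ ≤ P {ω | Φ01 (gt2 n ω) < Φ01 (gt1 n ω)} := measure_mono (fun ω hω => core n ω hω)
  have hup : ∀ n, P {ω | Φ01 (gt2 n ω) < Φ01 (gt1 n ω)} ≤ 1 :=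
    fun n => (measure_mono (Set.subset_univ _)).trans_eq measure_univ
  have hlim : Tendsto (fun n =>
      1 - P {ω | δ < Real.sqrt (∫ x in 𝒳, (ηhat n ω x - η x) ^ 2 * pX x)})
      atTop (nhds 1) := by
    have := ENNReal.Tendsto.sub (tendsto_const_nhds (x := (1:ENNReal)) (f := atTop))
      (hconv δ hδpos) (Or.inl ENNReal.one_ne_top)
    simpa using this
  exact tendsto_of_tendsto_of_tendsto_of_le_of_le hlim tendsto_const_nhds hlow hup
end

section
/- Infinite χ²-divergence but finite (2, 1)-fidelity level (Example 1). Let p(x) = 2x and p̃(x) = 2 − 2x be probability densities on [0, 1]. Then: (i) χ²(P ‖ P̃) = ∫_0^1 p̃(x)·(p(x)/p̃(x) − 1)² dx = ∞ and χ²(P̃ ‖ P) = ∫_0^1 p(x)·(p̃(x)/p(x) − 1)² dx = ∞; and (ii) p and p̃ satisfy the (2, 1)-fidelity level, i.e., for every C > 0, ∫_{{x ∈ [0,1] : p(x) ≥ C·p̃(x)}} p(x) dx ≤ 2/C and ∫_{{x ∈ [0,1] : p̃(x) ≥ C·p(x)}} p̃(x) dx ≤ 2/C. -/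
open MeasureTheory

lemma aux_not_int (c : ℝ)
    (f : ℝ → ℝ)
    (hbig : (fun x => (x - c)⁻¹) =O[nhdsWithin c {c}ᶜ] f)
    (hc : c ∈ Set.uIcc (0:ℝ) 1)
    (hfm : AEStronglyMeasurable f (volume.restrict (Set.Icc (0:ℝ) 1)))
    (hnn : 0 ≤ᵐ[volume.restrict (Set.Icc (0:ℝ) 1)] f) :
    (∫⁻ x in Set.Icc (0 : ℝ) 1, ENNReal.ofReal (f x)) = ⊤ := by
  by_contra h
  have hint : Integrable f (volume.restrict (Set.Icc (0:ℝ) 1)) :=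
    (MeasureTheory.lintegral_ofReal_ne_top_iff_integrable hfm hnn).mp h
  have h1 : IntegrableOn f (Set.Icc (0:ℝ) 1) volume := hint
  have h2 : IntegrableOn f (Set.Ioc (0:ℝ) 1) volume :=
    h1.mono_set Set.Ioc_subset_Icc_self
  have h3 : IntervalIntegrable f volume 0 1 :=
    (intervalIntegrable_iff_integrableOn_Ioc_of_le (by norm_num)).mpr h2
  exact not_intervalIntegrable_of_sub_inv_isBigO_punctured
    hbig (by norm_num) hc h3

/-- **Infinite χ²-divergence but finite (2, 1)-fidelity level (Example 1).**
`p(x) = 2x` and `p̃(x) = 2 − 2x` on `[0, 1]`: (i) both χ²-divergences (expressed as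
lower Lebesgue integrals of the nonnegative integrands) are infinite; (ii) `p` and
`p̃` satisfy the `(2, 1)`-fidelity level: for every `C > 0`,
`∫_{p ≥ C p̃} p ≤ 2/C` and `∫_{p̃ ≥ C p} p̃ ≤ 2/C`. -/
theorem stmt19 :
    (∫⁻ x in Set.Icc (0 : ℝ) 1,
        ENNReal.ofReal ((2 - 2 * x) * (2 * x / (2 - 2 * x) - 1) ^ 2)) = ⊤ ∧
    (∫⁻ x in Set.Icc (0 : ℝ) 1,
        ENNReal.ofReal ((2 * x) * ((2 - 2 * x) / (2 * x) - 1) ^ 2)) = ⊤ ∧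
    ∀ C : ℝ, 0 < C →
      (∫ x in {x ∈ Set.Icc (0 : ℝ) 1 | C * (2 - 2 * x) ≤ 2 * x}, 2 * x) ≤ 2 / C ∧
      (∫ x in {x ∈ Set.Icc (0 : ℝ) 1 | C * (2 * x) ≤ 2 - 2 * x}, 2 - 2 * x) ≤ 2 / C := by
  refine ⟨?_, ?_, ?_⟩
  · -- first χ² infinite, singularity at 1
    refine aux_not_int 1 _ ?_ (by rw [Set.uIcc_of_le (by norm_num : (0:ℝ) ≤ 1)]; norm_num) ?_ ?_
    · apply Asymptotics.IsBigO.of_bound 2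
      have hmem : ∀ᶠ x in nhdsWithin (1:ℝ) {(1:ℝ)}ᶜ, x ∈ Set.Ioo (3/4:ℝ) (5/4) :=
        eventually_nhdsWithin_of_eventually_nhds
          (eventually_nhds_iff.mpr ⟨Set.Ioo (3/4) (5/4), fun y hy => hy,
            isOpen_Ioo, by norm_num⟩)
      filter_upwards [hmem, self_mem_nhdsWithin] with x hx hx1
      have hx1' : x ≠ 1 := hx1
      have hu : (2 - 2*x) ≠ 0 := fun h => hx1' (by linarith)
      have hpos : 0 < |x - 1| := abs_pos.2 (sub_ne_zero.2 hx1')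
      have hf : (2-2*x) * (2*x/(2-2*x)-1)^2 = (4*x-2)^2 / (2-2*x) := by
        field_simp; ring
      have habs : |2-2*x| = 2 * |x-1| := by
        rw [show (2-2*x) = 2*(1-x) by ring, abs_mul, abs_two, abs_sub_comm]
      rw [hf, Real.norm_eq_abs, Real.norm_eq_abs, abs_div, habs, abs_inv]
      rw [show |(4*x-2)^2| = (4*x-2)^2 from abs_of_nonneg (sq_nonneg _)]
      rw [inv_eq_one_div, div_le_iff₀ hpos]
      have h1 : 1 ≤ (4*x-2)^2 := by nlinarith [hx.1]
      have heq : 2 * ((4*x-2)^2 / (2*|x-1|)) * |x-1| = (4*x-2)^2 := by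
        field_simp
      rw [heq]; exact h1
    · have m1 : Measurable fun x:ℝ => 2 - 2*x :=
        measurable_const.sub (measurable_id.const_mul 2)
      have m2 : Measurable fun x:ℝ => 2*x := measurable_id.const_mul 2
      exact (m1.mul (((m2.div m1).sub measurable_const).pow_const 2)).aestronglyMeasurable
    · filter_upwards [ae_restrict_mem measurableSet_Icc] with x hx
      exact mul_nonneg (by linarith [hx.2]) (sq_nonneg _)
  · -- second χ² infinite, singularity at 0
    refine aux_not_int 0 _ ?_ (by rw [Set.uIcc_of_le (by norm_num : (0:ℝ) ≤ 1)]; norm_num) ?_ ?_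
    · apply Asymptotics.IsBigO.of_bound 2
      have hmem : ∀ᶠ x in nhdsWithin (0:ℝ) {(0:ℝ)}ᶜ, x ∈ Set.Ioo (-(1/4):ℝ) (1/4) :=
        eventually_nhdsWithin_of_eventually_nhds
          (eventually_nhds_iff.mpr ⟨Set.Ioo (-(1/4)) (1/4), fun y hy => hy,
            isOpen_Ioo, by norm_num⟩)
      filter_upwards [hmem, self_mem_nhdsWithin] with x hx hx0
      have hx0' : x ≠ 0 := hx0
      have hu : (2*x) ≠ 0 := by simpa using hx0'
      have hpos : 0 < |x - 0| := abs_pos.2 (sub_ne_zero.2 hx0')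
      have hf : (2*x) * ((2-2*x)/(2*x)-1)^2 = (2-4*x)^2 / (2*x) := by
        field_simp; ring
      have habs : |2*x| = 2 * |x-0| := by
        rw [abs_mul, abs_two, sub_zero]
      rw [hf, Real.norm_eq_abs, Real.norm_eq_abs, abs_div, habs, abs_inv]
      rw [show |(2-4*x)^2| = (2-4*x)^2 from abs_of_nonneg (sq_nonneg _)]
      rw [inv_eq_one_div, div_le_iff₀ hpos]
      have h1 : 1 ≤ (2-4*x)^2 := by nlinarith [hx.2]
      have heq : 2 * ((2-4*x)^2 / (2*|x-0|)) * |x-0| = (2-4*x)^2 := by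
        field_simp
      rw [heq]; exact h1
    · have m1 : Measurable fun x:ℝ => 2 - 2*x :=
        measurable_const.sub (measurable_id.const_mul 2)
      have m2 : Measurable fun x:ℝ => 2*x := measurable_id.const_mul 2
      exact (m2.mul (((m1.div m2).sub measurable_const).pow_const 2)).aestronglyMeasurable
    · filter_upwards [ae_restrict_mem measurableSet_Icc] with x hx
      exact mul_nonneg (by linarith [hx.1]) (sq_nonneg _)
  · intro C hC
    have hC1 : (0:ℝ) < C + 1 := by linarith
    constructor
    · have hset : {x ∈ Set.Icc (0:ℝ) 1 | C * (2 - 2 * x) ≤ 2 * x}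
          = Set.Icc (C/(C+1)) 1 := by
        ext x
        simp only [Set.mem_setOf_eq, Set.mem_Icc, div_le_iff₀ hC1]
        constructor
        · rintro ⟨⟨h0, h1⟩, h2⟩; exact ⟨by nlinarith, h1⟩
        · rintro ⟨ha, h1⟩
          refine ⟨⟨by nlinarith, h1⟩, by nlinarith⟩
      have hle : C/(C+1) ≤ 1 := (div_le_one hC1).mpr (by linarith)
      rw [hset, MeasureTheory.integral_Icc_eq_integral_Ioc,
        ← intervalIntegral.integral_of_le hle]
      have hval : (∫ x in (C/(C+1))..1, 2 * x) = 1 - (C/(C+1))^2 := by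
        rw [intervalIntegral.integral_const_mul, integral_id]; ring
      rw [hval, le_div_iff₀ hC]
      have haeq : (C/(C+1)) * (C+1) = C := div_mul_cancel₀ _ hC1.ne'
      have h4 : (C/(C+1)) * ((C/(C+1)) * (C+1)) = (C/(C+1)) * C := by rw [haeq]
      have ha0 : 0 ≤ C/(C+1) := by positivity
      have ha1 : C/(C+1) ≤ 1 := hle
      nlinarith [haeq, h4, ha0, ha1, mul_nonneg ha0 (sub_nonneg.2 ha1)]
    · have hset : {x ∈ Set.Icc (0:ℝ) 1 | C * (2 * x) ≤ 2 - 2 * x}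
          = Set.Icc 0 (1/(C+1)) := by
        ext x
        simp only [Set.mem_setOf_eq, Set.mem_Icc, le_div_iff₀ hC1]
        constructor
        · rintro ⟨⟨h0, h1⟩, h2⟩; exact ⟨h0, by nlinarith⟩
        · rintro ⟨h0, ha⟩
          have h1 : x ≤ 1 := by nlinarith
          exact ⟨⟨h0, h1⟩, by nlinarith⟩
      have hle : (0:ℝ) ≤ 1/(C+1) := by positivity
      rw [hset, MeasureTheory.integral_Icc_eq_integral_Ioc,
        ← intervalIntegral.integral_of_le hle]
      have hval : (∫ x in (0:ℝ)..(1/(C+1)), (2 - 2 * x))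
          = 2 * (1/(C+1)) - (1/(C+1))^2 := by
        rw [intervalIntegral.integral_sub intervalIntegrable_const
          ((by continuity : Continuous fun x : ℝ => 2 * x).intervalIntegrable _ _),
          intervalIntegral.integral_const, intervalIntegral.integral_const_mul,
          integral_id]
        simp; ring
      rw [hval, le_div_iff₀ hC]
      have hbeq : (1/(C+1)) * (C+1) = 1 := by field_simp
      have h4 : (1/(C+1)) * ((1/(C+1)) * (C+1)) = (1/(C+1)) := by rw [hbeq, mul_one]
      have hb0 : 0 ≤ 1/(C+1) := by positivity
      have hb1 : 1/(C+1) ≤ 1 := by rw [div_le_one hC1]; linarith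
      nlinarith [hbeq, h4, hb0, hb1, mul_nonneg hb0 (sub_nonneg.2 hb1)]
end
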